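/- arXiv:0806.3160 — 9 statements merged into one kernel-verified Lean document; each statement's English description precedes it below -/
import Mathlib

section
/- Let a, b, c be real numbers with a² + b² > c² and a + c > 0, set s = √(a² + b² − c²), and assume b + s > 0 and −b + s > 0. Define δ₁ = 2·arctan((a + c)/(b + s)) and δ₂ = 2·arctan((a + c)/(−b + s)). Let α ≤ β be real numbers such that for every φ ∈ [α, β] one has 0 < (δ₁ + φ)/2 < π and 0 < (δ₂ − φ)/2 < π. Then ∫_α^β log(a·cos(φ) + b·sin(φ) + c) dφ = (β − α)·log(√(a² + b²)/2) + Cl₂(δ₂ − β) − Cl₂(δ₂ − α) + Cl₂(δ₁ + α) − Cl₂(δ₁ + β). -/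
open Real

/-- The Clausen function `Cl₂(x) = ∑_{n=1}^∞ sin(n x)/n²`. -/
noncomputable def Cl2 (x : ℝ) : ℝ := ∑' n : ℕ, Real.sin (((n : ℝ) + 1) * x) / ((n : ℝ) + 1) ^ 2

set_option maxHeartbeats 1000000


open Filter Finset Complex
open scoped Topology

private lemma sumsq : Summable (fun i : ℕ => 1 / ((i : ℝ) + 1) ^ 2) := by
  have := (summable_nat_add_iff (f := fun n : ℕ => 1 / (n : ℝ) ^ 2) 1).mpr
    ((Real.summable_one_div_nat_pow (p := 2)).mpr one_lt_two)
  simpa using this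

private lemma hfnorm (k : ℕ) : ‖(((k : ℂ)) + 1)⁻¹‖ = (((k : ℝ)) + 1)⁻¹ := by
  rw [norm_inv]
  congr 1
  have : ((k : ℂ)) + 1 = ((k + 1 : ℕ) : ℂ) := by push_cast; ring
  rw [this, Complex.norm_natCast]
  push_cast; ring

private lemma zlemma {z : ℂ} (hz1 : ‖z‖ = 1) (hz : z ≠ 1) :
    z.re < 1 ∧ (1 - z) ∈ Complex.slitPlane ∧ 0 < ‖1 - z‖ := by
  have hn : Complex.normSq z = 1 := by
    rw [← Complex.sq_norm, hz1]; norm_num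
  have hre : z.re < 1 := by
    rcases lt_or_ge z.re 1 with h | h
    · exact h
    · exfalso
      have him : z.im = 0 := by nlinarith [Complex.normSq_apply z]
      have : z.re = 1 := by nlinarith [Complex.normSq_apply z]
      exact hz (Complex.ext (by simp [this]) (by simp [him]))
  refine ⟨hre, Or.inl (by simpa using by linarith : 0 < (1 - z).re), ?_⟩
  rw [norm_pos_iff]
  intro h
  exact hz (sub_eq_zero.mp h).symm

private lemma abel_main {z : ℂ} (hz1 : ‖z‖ = 1) (hz : z ≠ 1) :
    (∀ n, ‖∑ i ∈ range n, z ^ (i + 1) / ((i : ℂ) + 1)‖ ≤ 4 / ‖1 - z‖) ∧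
    Tendsto (fun n => ∑ i ∈ range n, z ^ (i + 1) / ((i : ℂ) + 1)) atTop
      (𝓝 (-Complex.log (1 - z))) := by
  obtain ⟨hre, hslit, hc⟩ := zlemma hz1 hz
  set c := ‖1 - z‖ with hcdef
  set f : ℕ → ℂ := fun i => ((i : ℂ) + 1)⁻¹ with hf
  set g : ℕ → ℂ := fun i => z ^ (i + 1) with hg
  set G : ℕ → ℂ := fun n => ∑ i ∈ range n, g i with hG
  have hGbound : ∀ n, ‖G n‖ ≤ 2 / c := by
    intro n
    have : G n = z * ((z ^ n - 1) / (z - 1)) := by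
      rw [hG]
      simp only [hg, pow_succ']
      rw [← Finset.mul_sum, geom_sum_eq hz]
    rw [this, norm_mul, hz1, one_mul, norm_div]
    have h1 : ‖z ^ n - 1‖ ≤ 2 := by
      calc ‖z ^ n - 1‖ ≤ ‖z ^ n‖ + ‖(1:ℂ)‖ := norm_sub_le _ _
      _ = 2 := by rw [norm_pow, hz1]; norm_num
    have h2 : ‖z - 1‖ = c := by rw [norm_sub_rev]
    rw [h2]
    gcongr
  -- the series terms as f i • g i
  have hterm : ∀ i : ℕ, z ^ (i + 1) / ((i : ℂ) + 1) = f i • g i := by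
    intro i; simp [hf, hg, smul_eq_mul, div_eq_inv_mul]
  set d : ℕ → ℂ := fun i => (f (i + 1) - f i) • G (i + 1) with hd
  have hfdiff : ∀ i : ℕ, ‖f (i + 1) - f i‖ = ((i:ℝ) + 1)⁻¹ - ((i:ℝ) + 2)⁻¹ := by
    intro i
    have : f (i + 1) - f i = ((((i:ℝ) + 2)⁻¹ - ((i:ℝ) + 1)⁻¹ : ℝ) : ℂ) := by
      simp only [hf]
      push_cast
      ring
    rw [this, Complex.norm_real, Real.norm_eq_abs, abs_sub_comm, _root_.abs_of_nonneg]
    rw [sub_nonneg]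
    have h1 : (0:ℝ) < (i:ℝ) + 1 := by positivity
    have h2 : ((i:ℝ) + 1) ≤ (i:ℝ) + 2 := by linarith
    exact inv_anti₀ h1 h2
  have hd_le : ∀ i, ‖d i‖ ≤ (2 / c) * (((i:ℝ) + 1)⁻¹ - ((i:ℝ) + 2)⁻¹) := by
    intro i
    rw [hd]
    simp only [smul_eq_mul, norm_mul]
    have h1 : (0:ℝ) ≤ ((i:ℝ) + 1)⁻¹ - ((i:ℝ) + 2)⁻¹ := by
      rw [sub_nonneg]
      exact inv_anti₀ (by positivity) (by linarith)
    calc ‖f (i+1) - f i‖ * ‖G (i+1)‖ = (((i:ℝ) + 1)⁻¹ - ((i:ℝ) + 2)⁻¹) * ‖G (i+1)‖ := by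
          rw [hfdiff]
      _ ≤ (((i:ℝ) + 1)⁻¹ - ((i:ℝ) + 2)⁻¹) * (2 / c) := by
          exact mul_le_mul_of_nonneg_left (hGbound _) h1
      _ = (2 / c) * (((i:ℝ) + 1)⁻¹ - ((i:ℝ) + 2)⁻¹) := by ring
  have hd_le2 : ∀ i, ‖d i‖ ≤ (2 / c) * (1 / ((i:ℝ) + 1) ^ 2) := by
    intro i
    refine (hd_le i).trans ?_
    have h1 : (0:ℝ) < (i:ℝ) + 1 := by positivity
    have h2 : (0:ℝ) < (i:ℝ) + 2 := by positivity
    have : ((i:ℝ) + 1)⁻¹ - ((i:ℝ) + 2)⁻¹ ≤ 1 / ((i:ℝ) + 1) ^ 2 := by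
      rw [inv_sub_inv (by positivity) (by positivity)]
      rw [div_le_div_iff₀ (by positivity) (by positivity)]
      ring_nf
      nlinarith
    have hc2 : (0:ℝ) ≤ 2 / c := by positivity
    exact mul_le_mul_of_nonneg_left this hc2
  have hd_sum : Summable d :=
    Summable.of_norm_bounded (sumsq.mul_left (2 / c)) hd_le2
  set T := ∑' i, d i with hT
  have htel0 : ∀ m : ℕ, ∑ i ∈ range m, (((i:ℝ) + 1)⁻¹ - ((i:ℝ) + 2)⁻¹) = 1 - ((m:ℝ) + 1)⁻¹ := by
    intro m
    induction m with
    | zero => simp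
    | succ k ih =>
      rw [Finset.sum_range_succ, ih]
      push_cast
      have hk1 : ((k:ℝ) + 1) ≠ 0 := by positivity
      have hk2 : ((k:ℝ) + 2) ≠ 0 := by positivity
      field_simp
      ring
  have htel : ∀ m : ℕ, ∑ i ∈ range m, (((i:ℝ) + 1)⁻¹ - ((i:ℝ) + 2)⁻¹) ≤ 1 := by
    intro m
    rw [htel0 m]
    have : (0:ℝ) ≤ ((m:ℝ) + 1)⁻¹ := by positivity
    linarith
  -- by parts
  have hbp : ∀ n : ℕ, ∑ i ∈ range n, f i • g i
      = f (n - 1) • G n - ∑ i ∈ range (n - 1), d i :=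
    fun n => Finset.sum_range_by_parts f g n
  have hfn_le : ∀ k : ℕ, ‖f k‖ ≤ 1 := by
    intro k
    rw [hf, hfnorm k]
    rw [inv_le_one_iff₀]
    right; linarith [Nat.cast_nonneg (α := ℝ) k]
  constructor
  · intro n
    have : ∑ i ∈ range n, z ^ (i + 1) / ((i : ℂ) + 1) = ∑ i ∈ range n, f i • g i := by
      apply Finset.sum_congr rfl; intro i _; exact hterm i
    rw [this, hbp n]
    have h1 : ‖f (n - 1) • G n‖ ≤ 2 / c := by
      rw [smul_eq_mul, norm_mul]
      calc ‖f (n-1)‖ * ‖G n‖ ≤ 1 * (2 / c) := by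
            apply mul_le_mul (hfn_le _) (hGbound _) (norm_nonneg _) zero_le_one
        _ = 2 / c := one_mul _
    have h2 : ‖∑ i ∈ range (n - 1), d i‖ ≤ 2 / c := by
      calc ‖∑ i ∈ range (n - 1), d i‖ ≤ ∑ i ∈ range (n - 1), ‖d i‖ := norm_sum_le _ _
        _ ≤ ∑ i ∈ range (n - 1), (2 / c) * (((i:ℝ) + 1)⁻¹ - ((i:ℝ) + 2)⁻¹) := by
            exact Finset.sum_le_sum fun i _ => hd_le i
        _ = (2 / c) * ∑ i ∈ range (n - 1), (((i:ℝ) + 1)⁻¹ - ((i:ℝ) + 2)⁻¹) := by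
            rw [Finset.mul_sum]
        _ ≤ (2 / c) * 1 := by
            exact mul_le_mul_of_nonneg_left (htel _) (by positivity)
        _ = 2 / c := mul_one _
    calc ‖f (n - 1) • G n - ∑ i ∈ range (n - 1), d i‖
        ≤ ‖f (n - 1) • G n‖ + ‖∑ i ∈ range (n - 1), d i‖ := norm_sub_le _ _
      _ ≤ 2 / c + 2 / c := add_le_add h1 h2
      _ = 4 / c := by ring
  · -- convergence
    have h2 : Tendsto (fun n => ∑ i ∈ range (n - 1), d i) atTop (𝓝 T) :=
      (hd_sum.hasSum.tendsto_sum_nat).comp (tendsto_sub_atTop_nat 1)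
    have h3 : Tendsto (fun n => f (n - 1) • G n) atTop (𝓝 0) := by
      have hb : ∀ n : ℕ, ‖f (n - 1) • G n‖ ≤ (2 / c) * (n : ℝ)⁻¹ := by
        intro n
        cases n with
        | zero => simp [hG]
        | succ m =>
          rw [smul_eq_mul, norm_mul]
          have hfm : ‖f (m + 1 - 1)‖ = ((m:ℝ) + 1)⁻¹ := by
            simp only [Nat.add_sub_cancel]; rw [hf, hfnorm]
          rw [hfm]
          calc ((m:ℝ) + 1)⁻¹ * ‖G (m+1)‖ ≤ ((m:ℝ) + 1)⁻¹ * (2 / c) := by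
                exact mul_le_mul_of_nonneg_left (hGbound _) (by positivity)
            _ = (2 / c) * ((m + 1 : ℕ) : ℝ)⁻¹ := by push_cast; ring
      have ht : Tendsto (fun n : ℕ => (2 / c) * (n : ℝ)⁻¹) atTop (𝓝 0) := by
        simpa using (tendsto_inv_atTop_nhds_zero_nat).const_mul (2 / c)
      exact squeeze_zero_norm hb ht
    have hP : Tendsto (fun n => ∑ i ∈ range n, f i • g i) atTop (𝓝 (0 - T)) := by
      apply Tendsto.congr (fun n => (hbp n).symm)
      exact h3.sub h2
    have hP' : Tendsto (fun n => ∑ i ∈ range n, z ^ (i + 1) / ((i : ℂ) + 1)) atTop (𝓝 (0 - T)) := by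
      apply hP.congr
      intro n
      exact (Finset.sum_congr rfl fun i _ => (hterm i).symm)
    -- identify the limit via Abel's theorem
    set F : ℕ → ℂ := fun n => z ^ n / n with hF
    have hFsum : Tendsto (fun n => ∑ i ∈ range n, F i) atTop (𝓝 (0 - T)) := by
      have key : ∀ n : ℕ, ∑ i ∈ range n, F i = ∑ i ∈ range (n - 1), z ^ (i + 1) / ((i : ℂ) + 1) := by
        intro n
        cases n with
        | zero => simp
        | succ m =>
          rw [Finset.sum_range_succ']
          simp only [hF, Nat.add_sub_cancel]
          have : z ^ (0:ℕ) / ((0:ℕ) : ℂ) = 0 := by norm_num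
          rw [this, add_zero]
          apply Finset.sum_congr rfl
          intro i _
          push_cast; ring_nf
      rw [show (fun n => ∑ i ∈ range n, F i)
          = fun n => ∑ i ∈ range (n-1), z ^ (i + 1) / ((i : ℂ) + 1) from funext key]
      exact hP'.comp (tendsto_sub_atTop_nat 1)
    have hAbel := Complex.tendsto_tsum_powerSeries_nhdsWithin_lt hFsum
    have hOther : Tendsto (fun x : ℝ => ∑' n, F n * (x : ℂ) ^ n) (𝓝[<] (1:ℝ))
        (𝓝 (-Complex.log (1 - z))) := by
      have hev : ∀ᶠ x : ℝ in 𝓝[<] (1:ℝ), -Complex.log (1 - (x : ℂ) * z)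
          = ∑' n, F n * (x : ℂ) ^ n := by
        filter_upwards [Ioo_mem_nhdsLT_of_mem (show (1:ℝ) ∈ Set.Ioc 0 1 by norm_num)] with x hx
        have hnorm : ‖(x : ℂ) * z‖ < 1 := by
          rw [norm_mul, hz1, mul_one, Complex.norm_real, Real.norm_eq_abs]
          rw [abs_of_pos hx.1]; exact hx.2
        have := Complex.hasSum_taylorSeries_neg_log hnorm
        rw [← this.tsum_eq]
        apply tsum_congr
        intro n
        rw [hF]
        push_cast
        ring
      have hcont : Tendsto (fun x : ℝ => -Complex.log (1 - (x : ℂ) * z)) (𝓝[<] (1:ℝ))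
          (𝓝 (-Complex.log (1 - z))) := by
        have hmap : Tendsto (fun x : ℝ => 1 - (x : ℂ) * z) (𝓝[<] (1:ℝ)) (𝓝 (1 - z)) := by
          have : Continuous (fun x : ℝ => 1 - (x : ℂ) * z) :=
            continuous_const.sub (Complex.continuous_ofReal.mul continuous_const)
          have := this.tendsto (1:ℝ)
          simp only [Complex.ofReal_one, one_mul] at this
          exact this.mono_left nhdsWithin_le_nhds
        exact ((continuousAt_clog hslit).tendsto.comp hmap).neg
      exact hcont.congr' hev
    have hmapped : Tendsto (fun w : ℂ => ∑' n, F n * w ^ n) ((𝓝[<] (1:ℝ)).map Complex.ofReal)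
        (𝓝 (-Complex.log (1 - z))) := by
      rw [tendsto_map'_iff]
      exact hOther
    have hne : ((𝓝[<] (1:ℝ)).map Complex.ofReal).NeBot := Filter.map_neBot
    have : (0 : ℂ) - T = -Complex.log (1 - z) := tendsto_nhds_unique hAbel hmapped
    rwa [this] at hP'

open Filter Finset
open scoped Topology Real

private lemma norm_one_sub_exp (t : ℝ) (h0 : 0 ≤ t) (h2 : t ≤ 2 * π) :
    ‖1 - Complex.exp (t * Complex.I)‖ = 2 * Real.sin (t / 2) := by
  have hsin : 0 ≤ Real.sin (t / 2) :=
    Real.sin_nonneg_of_nonneg_of_le_pi (by linarith) (by linarith)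
  have hre : (1 - Complex.exp (t * Complex.I)).re = 1 - Real.cos t := by
    simp [Complex.exp_ofReal_mul_I_re]
  have him : (1 - Complex.exp (t * Complex.I)).im = -Real.sin t := by
    simp [Complex.exp_ofReal_mul_I_im]
  have hsq : ‖1 - Complex.exp (t * Complex.I)‖ ^ 2 = (2 * Real.sin (t / 2)) ^ 2 := by
    rw [Complex.sq_norm, Complex.normSq_apply, hre, him]
    have h1 := Real.cos_two_mul (t / 2)
    rw [show 2 * (t / 2) = t by ring] at h1
    have hs := Real.sin_two_mul (t / 2)
    rw [show 2 * (t / 2) = t by ring] at hs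
    have hpyth := Real.sin_sq_add_cos_sq (t / 2)
    rw [h1, hs]
    nlinarith [hpyth]
  have h1 := Real.sqrt_sq (norm_nonneg (1 - Complex.exp (t * Complex.I)))
  have h2' := Real.sqrt_sq (by positivity : (0:ℝ) ≤ 2 * Real.sin (t / 2))
  rw [← h1, ← h2', hsq]

private lemma exp_ne_one (t : ℝ) (h0 : 0 < t) (h2 : t < 2 * π) :
    Complex.exp (t * Complex.I) ≠ 1 := by
  intro h
  rw [Complex.exp_eq_one_iff] at h
  obtain ⟨n, hn⟩ := h
  have hI : ((t : ℂ)) = n * (2 * π) := by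
    have : (n : ℂ) * (2 * ↑π * Complex.I) = ((n : ℂ) * (2 * ↑π)) * Complex.I := by ring
    rw [this] at hn
    exact mul_right_cancel₀ Complex.I_ne_zero hn
  have ht : t = (n : ℝ) * (2 * π) := by
    have : ((t : ℂ)) = (((n : ℝ) * (2 * π) : ℝ) : ℂ) := by rw [hI]; push_cast; ring
    exact_mod_cast this
  have hπ := Real.pi_pos
  rcases le_or_gt (n : ℝ) 0 with h | h
  · nlinarith
  · have : (1 : ℝ) ≤ (n : ℝ) := by exact_mod_cast (by exact_mod_cast h : (0:ℤ) < n)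
    nlinarith

open Real in
private lemma cos_partial {t : ℝ} (h0 : 0 < t) (h2 : t < 2 * π) :
    (∀ m, |∑ n ∈ range m, Real.cos (((n:ℝ) + 1) * t) / ((n:ℝ) + 1)| ≤ 4 / (2 * Real.sin (t / 2))) ∧
    Tendsto (fun m => ∑ n ∈ range m, Real.cos (((n:ℝ) + 1) * t) / ((n:ℝ) + 1)) atTop
      (𝓝 (-Real.log (2 * Real.sin (t / 2)))) := by
  set z := Complex.exp (t * Complex.I) with hzdef
  have hz1 : ‖z‖ = 1 := Complex.norm_exp_ofReal_mul_I t
  have hz : z ≠ 1 := exp_ne_one t h0 h2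
  have habs : ‖1 - z‖ = 2 * Real.sin (t / 2) := norm_one_sub_exp t h0.le h2.le
  obtain ⟨hbd, htd⟩ := abel_main hz1 hz
  have hre : ∀ m, ∑ n ∈ range m, Real.cos (((n:ℝ) + 1) * t) / ((n:ℝ) + 1)
      = (∑ n ∈ range m, z ^ (n + 1) / ((n:ℂ) + 1)).re := by
    intro m
    rw [Complex.re_sum]
    apply Finset.sum_congr rfl
    intro n _
    have hzp : z ^ (n + 1) = Complex.exp ((((n:ℝ) + 1) * t : ℝ) * Complex.I) := by
      rw [hzdef, ← Complex.exp_nat_mul]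
      congr 1
      push_cast
      ring
    have hcast : ((n:ℂ) + 1) = (((n:ℝ) + 1 : ℝ) : ℂ) := by push_cast; ring
    rw [hzp, hcast, Complex.div_ofReal_re, Complex.exp_ofReal_mul_I_re]
  constructor
  · intro m
    rw [hre m, ← habs]
    exact le_trans (Complex.abs_re_le_norm _) (hbd m)
  · have := (Complex.continuous_re.tendsto _).comp htd
    simp only [Function.comp_def] at this
    have hlog : (-Complex.log (1 - z)).re = -Real.log (2 * Real.sin (t / 2)) := by
      rw [Complex.neg_re, Complex.log_re, ← habs]
    rw [hlog] at this
    apply this.congr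
    intro m
    exact (hre m).symm

private lemma Cl2_summable (x : ℝ) :
    Summable (fun n : ℕ => Real.sin (((n:ℝ) + 1) * x) / ((n:ℝ) + 1) ^ 2) := by
  apply Summable.of_norm_bounded sumsq
  intro n
  rw [Real.norm_eq_abs, abs_div, abs_of_pos (by positivity : (0:ℝ) < ((n:ℝ)+1)^2)]
  rw [div_le_div_iff₀ (by positivity) (by positivity), one_mul]
  calc |Real.sin (((n:ℝ)+1)*x)| * ((n:ℝ)+1)^2 ≤ 1 * ((n:ℝ)+1)^2 := by
        apply mul_le_mul_of_nonneg_right (Real.abs_sin_le_one _) (by positivity)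
    _ = ((n:ℝ)+1)^2 := one_mul _

open Real intervalIntegral in
private lemma Cl2_diff {u v : ℝ} (hu : 0 < u) (huv : u ≤ v) (hv : v < 2 * π) :
    Cl2 v - Cl2 u = ∫ t in u..v, (-Real.log (2 * Real.sin (t / 2))) := by
  have hsu := Cl2_summable u
  have hsv := Cl2_summable v
  have hdiff : HasSum (fun n : ℕ => Real.sin (((n:ℝ) + 1) * v) / ((n:ℝ) + 1) ^ 2
      - Real.sin (((n:ℝ) + 1) * u) / ((n:ℝ) + 1) ^ 2) (Cl2 v - Cl2 u) :=
    hsv.hasSum.sub hsu.hasSum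
  have htend : Tendsto (fun m => ∑ n ∈ range m, (Real.sin (((n:ℝ) + 1) * v) / ((n:ℝ) + 1) ^ 2
      - Real.sin (((n:ℝ) + 1) * u) / ((n:ℝ) + 1) ^ 2)) atTop (𝓝 (Cl2 v - Cl2 u)) :=
    hdiff.tendsto_sum_nat
  -- partial sums as integrals
  have hderiv : ∀ (n : ℕ) (t : ℝ), HasDerivAt (fun t => Real.sin (((n:ℝ) + 1) * t) / ((n:ℝ) + 1) ^ 2)
      (Real.cos (((n:ℝ) + 1) * t) / ((n:ℝ) + 1)) t := by
    intro n t
    have h1 : HasDerivAt (fun t : ℝ => ((n:ℝ) + 1) * t) ((n:ℝ) + 1) t := by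
      simpa using (hasDerivAt_id t).const_mul ((n:ℝ) + 1)
    have h2 := (Real.hasDerivAt_sin (((n:ℝ) + 1) * t)).comp t h1
    have h3 := h2.div_const (((n:ℝ) + 1) ^ 2)
    refine h3.congr_deriv ?_
    rw [div_eq_div_iff (by positivity) (by positivity)]
    ring
  have hterm : ∀ n : ℕ, ∫ t in u..v, Real.cos (((n:ℝ) + 1) * t) / ((n:ℝ) + 1)
      = Real.sin (((n:ℝ) + 1) * v) / ((n:ℝ) + 1) ^ 2 - Real.sin (((n:ℝ) + 1) * u) / ((n:ℝ) + 1) ^ 2 := by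
    intro n
    apply integral_eq_sub_of_hasDerivAt (fun t _ => hderiv n t)
    apply Continuous.intervalIntegrable
    exact (Real.continuous_cos.comp (continuous_const.mul continuous_id)).div_const _
  have hFeq : ∀ m : ℕ, ∑ n ∈ range m, (Real.sin (((n:ℝ) + 1) * v) / ((n:ℝ) + 1) ^ 2
      - Real.sin (((n:ℝ) + 1) * u) / ((n:ℝ) + 1) ^ 2)
      = ∫ t in u..v, (∑ n ∈ range m, Real.cos (((n:ℝ) + 1) * t) / ((n:ℝ) + 1)) := by
    intro m
    rw [integral_finset_sum]
    · exact (Finset.sum_congr rfl fun n _ => (hterm n).symm)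
    · intro n _
      apply Continuous.intervalIntegrable
      exact (Real.continuous_cos.comp (continuous_const.mul continuous_id)).div_const _
  -- dominated convergence
  have hsub : ∀ t : ℝ, t ∈ Set.uIoc u v → 0 < t ∧ t < 2 * π := by
    intro t ht
    rw [Set.uIoc_of_le huv] at ht
    exact ⟨hu.trans ht.1, lt_of_le_of_lt ht.2 hv⟩
  have hdct : Tendsto (fun m => ∫ t in u..v, (∑ n ∈ range m, Real.cos (((n:ℝ) + 1) * t) / ((n:ℝ) + 1)))
      atTop (𝓝 (∫ t in u..v, (-Real.log (2 * Real.sin (t / 2))))) := by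
    apply tendsto_integral_filter_of_dominated_convergence
      (bound := fun t => 4 / (2 * Real.sin (t / 2)))
    · apply Eventually.of_forall
      intro m
      apply Continuous.aestronglyMeasurable
      apply continuous_finset_sum
      intro n _
      exact (Real.continuous_cos.comp (continuous_const.mul continuous_id)).div_const _
    · apply Eventually.of_forall
      intro m
      apply Eventually.of_forall
      intro t ht
      obtain ⟨ht0, ht2⟩ := hsub t ht
      rw [Real.norm_eq_abs]
      exact (cos_partial ht0 ht2).1 m
    · -- integrability of bound
      apply ContinuousOn.intervalIntegrable
      intro t ht
      rw [Set.uIcc_of_le huv] at ht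
      have hsin : 0 < Real.sin (t / 2) := by
        apply Real.sin_pos_of_pos_of_lt_pi
        · linarith [ht.1]
        · have := lt_of_le_of_lt ht.2 hv
          linarith
      apply ContinuousWithinAt.div
      · exact continuousWithinAt_const
      · apply Continuous.continuousWithinAt
        exact continuous_const.mul (Real.continuous_sin.comp (continuous_id.div_const 2))
      · positivity
    · apply Eventually.of_forall
      intro t ht
      obtain ⟨ht0, ht2⟩ := hsub t ht
      exact (cos_partial ht0 ht2).2
  have := tendsto_nhds_unique (htend.congr hFeq) hdct
  exact this

open Real MeasureTheory intervalIntegral in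
private lemma Cl2_hasDerivAt {x : ℝ} (h0 : 0 < x) (h2 : x < 2 * π) :
    HasDerivAt Cl2 (-Real.log (2 * Real.sin (x / 2))) x := by
  have hπ := Real.pi_pos
  set g : ℝ → ℝ := fun t => -Real.log (2 * Real.sin (t / 2)) with hg
  set u := x / 2 with hudef
  set v := (x + 2 * π) / 2 with hvdef
  have hu : 0 < u := by positivity
  have hux : u < x := by rw [hudef]; linarith
  have hxv : x < v := by rw [hvdef]; linarith
  have hv : v < 2 * π := by rw [hvdef]; linarith
  have hgcont : ContinuousOn g (Set.Ioo 0 (2 * π)) := by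
    intro t ht
    have hsin : 0 < Real.sin (t / 2) :=
      Real.sin_pos_of_pos_of_lt_pi (by linarith [ht.1]) (by linarith [ht.2])
    apply ContinuousAt.continuousWithinAt
    apply ContinuousAt.neg
    apply ContinuousAt.comp (Real.continuousAt_log (by positivity))
    exact (continuous_const.mul (Real.continuous_sin.comp (continuous_id.div_const 2))).continuousAt
  have hgint : IntervalIntegrable g volume u x := by
    apply ContinuousOn.intervalIntegrable
    apply hgcont.mono
    rw [Set.uIcc_of_le hux.le]
    intro t ht
    exact ⟨lt_of_lt_of_le hu ht.1, lt_of_le_of_lt ht.2 (by linarith)⟩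
  have hmeas : StronglyMeasurableAtFilter g (𝓝 x) volume :=
    ContinuousOn.stronglyMeasurableAtFilter isOpen_Ioo hgcont x ⟨h0, h2⟩
  have hgca : ContinuousAt g x := by
    have hsin : 0 < Real.sin (x / 2) :=
      Real.sin_pos_of_pos_of_lt_pi (by linarith) (by linarith)
    apply ContinuousAt.neg
    apply ContinuousAt.comp (Real.continuousAt_log (by positivity))
    exact (continuous_const.mul (Real.continuous_sin.comp (continuous_id.div_const 2))).continuousAt
  have hΦ : HasDerivAt (fun y => Cl2 u + ∫ t in u..y, g t) (g x) x := by
    apply HasDerivAt.const_add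
    exact integral_hasDerivAt_right hgint hmeas hgca
  apply hΦ.congr_of_eventuallyEq
  filter_upwards [isOpen_Ioo.mem_nhds (Set.mem_Ioo.mpr ⟨hux, hxv⟩)] with y hy
  have := Cl2_diff hu hy.1.le (lt_trans hy.2 hv)
  simp only [hg]
  linarith [this]

private lemma trig_facts {a b c s : ℝ} (habc : c ^ 2 < a ^ 2 + b ^ 2) (hac : 0 < a + c)
    (hs : s = Real.sqrt (a ^ 2 + b ^ 2 - c ^ 2)) (hbs : 0 < b + s) (hbs' : 0 < -b + s) :
    Real.sqrt (a ^ 2 + b ^ 2) * Real.cos (Real.arctan ((a+c)/(b+s)) - Real.arctan ((a+c)/(-b+s))) = a ∧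
    Real.sqrt (a ^ 2 + b ^ 2) * Real.sin (Real.arctan ((a+c)/(b+s)) - Real.arctan ((a+c)/(-b+s))) = -b ∧
    Real.sqrt (a ^ 2 + b ^ 2) * Real.cos (Real.arctan ((a+c)/(b+s)) + Real.arctan ((a+c)/(-b+s))) = -c := by
  have hss : s ^ 2 = a ^ 2 + b ^ 2 - c ^ 2 := by
    rw [hs]; exact Real.sq_sqrt (by linarith)
  set R := Real.sqrt (a ^ 2 + b ^ 2) with hRdef
  have hK : (0:ℝ) < a ^ 2 + b ^ 2 := lt_of_le_of_lt (sq_nonneg c) habc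
  have hR0 : 0 < R := Real.sqrt_pos.mpr hK
  have hRsq : R ^ 2 = a ^ 2 + b ^ 2 := Real.sq_sqrt hK.le
  set p := (a + c) / (b + s) with hpdef
  set q := (a + c) / (-b + s) with hqdef
  have hD : (b + s) * (-b + s) = a ^ 2 - c ^ 2 := by nlinarith [hss]
  have hD0 : (0:ℝ) < a ^ 2 - c ^ 2 := hD ▸ mul_pos hbs hbs'
  set u1 := Real.sqrt (1 + p ^ 2) with hu1def
  set u2 := Real.sqrt (1 + q ^ 2) with hu2def
  have hu1 : 0 < u1 := Real.sqrt_pos.mpr (by positivity)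
  have hu2 : 0 < u2 := Real.sqrt_pos.mpr (by positivity)
  have e1 : u1 ^ 2 = 1 + p ^ 2 := Real.sq_sqrt (by positivity)
  have e2 : u2 ^ 2 = 1 + q ^ 2 := Real.sq_sqrt (by positivity)
  have hp2 : (1 + p ^ 2) * (b + s) ^ 2 = (b + s) ^ 2 + (a + c) ^ 2 := by
    rw [hpdef]; field_simp
  have hq2 : (1 + q ^ 2) * (-b + s) ^ 2 = (-b + s) ^ 2 + (a + c) ^ 2 := by
    rw [hqdef]; field_simp
  have hpoly : ((b+s)^2 + (a+c)^2) * ((-b+s)^2 + (a+c)^2) = 4*(a^2+b^2)*(a+c)^2 := by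
    linear_combination (s^2 + a^2 + b^2 - c^2 - 2*b^2 + 2*(a+c)^2) * hss
  have hsq : (u1 * u2 * (a ^ 2 - c ^ 2)) ^ 2 = (2 * R * (a + c)) ^ 2 := by
    have step1 : (u1 * u2 * (a ^ 2 - c ^ 2)) ^ 2
        = ((1 + p ^ 2) * (b + s) ^ 2) * ((1 + q ^ 2) * (-b + s) ^ 2) := by
      rw [← hD]
      have : (u1 * u2 * ((b + s) * (-b + s))) ^ 2
          = u1 ^ 2 * u2 ^ 2 * ((b + s) ^ 2 * (-b + s) ^ 2) := by ring
      rw [this, e1, e2]; ring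
    rw [step1, hp2, hq2, hpoly]
    have : (2 * R * (a + c)) ^ 2 = 4 * R ^ 2 * (a + c) ^ 2 := by ring
    rw [this, hRsq]
  have key : u1 * u2 * (a ^ 2 - c ^ 2) = 2 * R * (a + c) := by
    have hnn1 : 0 ≤ u1 * u2 * (a ^ 2 - c ^ 2) := by positivity
    have hnn2 : 0 ≤ 2 * R * (a + c) := by positivity
    calc u1 * u2 * (a ^ 2 - c ^ 2) = Real.sqrt ((u1 * u2 * (a ^ 2 - c ^ 2)) ^ 2) :=
          (Real.sqrt_sq hnn1).symm
      _ = Real.sqrt ((2 * R * (a + c)) ^ 2) := by rw [hsq]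
      _ = 2 * R * (a + c) := Real.sqrt_sq hnn2
  have hpq : p * q * (a ^ 2 - c ^ 2) = (a + c) ^ 2 := by
    rw [hpdef, hqdef, ← hD]; field_simp
  have hpmq : (p - q) * (a ^ 2 - c ^ 2) = -2 * b * (a + c) := by
    rw [hpdef, hqdef, ← hD]; field_simp; ring
  have hca : Real.cos (Real.arctan p) = 1 / u1 := by rw [Real.cos_arctan, hu1def]
  have hsa : Real.sin (Real.arctan p) = p / u1 := by rw [Real.sin_arctan, hu1def]
  have hcb : Real.cos (Real.arctan q) = 1 / u2 := by rw [Real.cos_arctan, hu2def]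
  have hsb : Real.sin (Real.arctan q) = q / u2 := by rw [Real.sin_arctan, hu2def]
  refine ⟨?_, ?_, ?_⟩
  · rw [Real.cos_sub, hca, hsa, hcb, hsb]
    have expand : R * (1 / u1 * (1 / u2) + p / u1 * (q / u2)) = R * (1 + p * q) / (u1 * u2) := by
      field_simp
    rw [expand]
    rw [div_eq_iff (by positivity : u1 * u2 ≠ 0)]
    -- R * (1 + p*q) = a * (u1 * u2)
    have hmul : R * (1 + p * q) * (a ^ 2 - c ^ 2) = a * (u1 * u2) * (a ^ 2 - c ^ 2) := by
      have lhs : R * (1 + p * q) * (a ^ 2 - c ^ 2)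
          = R * ((a ^ 2 - c ^ 2) + p * q * (a ^ 2 - c ^ 2)) := by ring
      rw [lhs, hpq]
      have rhs : a * (u1 * u2) * (a ^ 2 - c ^ 2) = a * (u1 * u2 * (a ^ 2 - c ^ 2)) := by ring
      rw [rhs, key]; ring
    exact mul_right_cancel₀ hD0.ne' hmul
  · rw [Real.sin_sub, hca, hsa, hcb, hsb]
    have expand : R * (p / u1 * (1 / u2) - 1 / u1 * (q / u2)) = R * (p - q) / (u1 * u2) := by
      field_simp
    rw [expand, div_eq_iff (by positivity : u1 * u2 ≠ 0)]
    have hmul : R * (p - q) * (a ^ 2 - c ^ 2) = -b * (u1 * u2) * (a ^ 2 - c ^ 2) := by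
      have lhs : R * (p - q) * (a ^ 2 - c ^ 2) = R * ((p - q) * (a ^ 2 - c ^ 2)) := by ring
      rw [lhs, hpmq]
      have rhs : -b * (u1 * u2) * (a ^ 2 - c ^ 2) = -b * (u1 * u2 * (a ^ 2 - c ^ 2)) := by ring
      rw [rhs, key]; ring
    exact mul_right_cancel₀ hD0.ne' hmul
  · rw [Real.cos_add, hca, hsa, hcb, hsb]
    have expand : R * (1 / u1 * (1 / u2) - p / u1 * (q / u2)) = R * (1 - p * q) / (u1 * u2) := by
      field_simp
    rw [expand, div_eq_iff (by positivity : u1 * u2 ≠ 0)]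
    have hmul : R * (1 - p * q) * (a ^ 2 - c ^ 2) = -c * (u1 * u2) * (a ^ 2 - c ^ 2) := by
      have lhs : R * (1 - p * q) * (a ^ 2 - c ^ 2)
          = R * ((a ^ 2 - c ^ 2) - p * q * (a ^ 2 - c ^ 2)) := by ring
      rw [lhs, hpq]
      have rhs : -c * (u1 * u2) * (a ^ 2 - c ^ 2) = -c * (u1 * u2 * (a ^ 2 - c ^ 2)) := by ring
      rw [rhs, key]; ring
    exact mul_right_cancel₀ hD0.ne' hmul


open Real intervalIntegral in
theorem stmt4 (a b c s δ₁ δ₂ α β : ℝ)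
    (habc : c ^ 2 < a ^ 2 + b ^ 2) (hac : 0 < a + c)
    (hs : s = Real.sqrt (a ^ 2 + b ^ 2 - c ^ 2))
    (hbs : 0 < b + s) (hbs' : 0 < -b + s)
    (hδ₁ : δ₁ = 2 * Real.arctan ((a + c) / (b + s)))
    (hδ₂ : δ₂ = 2 * Real.arctan ((a + c) / (-b + s)))
    (hαβ : α ≤ β)
    (hrange : ∀ φ ∈ Set.Icc α β,
      (0 < (δ₁ + φ) / 2 ∧ (δ₁ + φ) / 2 < π) ∧ (0 < (δ₂ - φ) / 2 ∧ (δ₂ - φ) / 2 < π)) :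
    ∫ φ in α..β, Real.log (a * Real.cos φ + b * Real.sin φ + c) =
      (β - α) * Real.log (Real.sqrt (a ^ 2 + b ^ 2) / 2)
        + Cl2 (δ₂ - β) - Cl2 (δ₂ - α) + Cl2 (δ₁ + α) - Cl2 (δ₁ + β) := by
  obtain ⟨t1, t2, t3⟩ := trig_facts habc hac hs hbs hbs'
  set R := Real.sqrt (a ^ 2 + b ^ 2) with hRdef
  have hK : (0:ℝ) < a ^ 2 + b ^ 2 := lt_of_le_of_lt (sq_nonneg c) habc
  have hR0 : 0 < R := Real.sqrt_pos.mpr hK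
  have hE1 : (δ₁ - δ₂) / 2 = Real.arctan ((a+c)/(b+s)) - Real.arctan ((a+c)/(-b+s)) := by
    rw [hδ₁, hδ₂]; ring
  have hE2 : (δ₁ + δ₂) / 2 = Real.arctan ((a+c)/(b+s)) + Real.arctan ((a+c)/(-b+s)) := by
    rw [hδ₁, hδ₂]; ring
  rw [← hE1] at t1 t2
  rw [← hE2] at t3
  -- the key factorization
  have hkey : ∀ φ : ℝ, a * Real.cos φ + b * Real.sin φ + c
      = (R / 2) * (2 * Real.sin ((δ₁ + φ) / 2)) * (2 * Real.sin ((δ₂ - φ) / 2)) := by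
    intro φ
    have h := Real.cos_sub_cos (φ + (δ₁ - δ₂) / 2) ((δ₁ + δ₂) / 2)
    have hx : (φ + (δ₁ - δ₂) / 2 + (δ₁ + δ₂) / 2) / 2 = (δ₁ + φ) / 2 := by ring
    have hy : (φ + (δ₁ - δ₂) / 2 - (δ₁ + δ₂) / 2) / 2 = -((δ₂ - φ) / 2) := by ring
    rw [hx, hy, Real.sin_neg] at h
    have hca := Real.cos_add φ ((δ₁ - δ₂) / 2)
    linear_combination (-Real.cos φ) * t1 + (Real.sin φ) * t2 + t3 + R * h + (-R) * hca
  -- positivity on the interval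
  have hpos : ∀ φ ∈ Set.Icc α β, 0 < a * Real.cos φ + b * Real.sin φ + c := by
    intro φ hφ
    obtain ⟨⟨hA0, hA2⟩, ⟨hB0, hB2⟩⟩ := hrange φ hφ
    have hsA : 0 < Real.sin ((δ₁ + φ) / 2) := Real.sin_pos_of_pos_of_lt_pi hA0 hA2
    have hsB : 0 < Real.sin ((δ₂ - φ) / 2) := Real.sin_pos_of_pos_of_lt_pi hB0 hB2
    rw [hkey φ]
    positivity
  -- the antiderivative
  set F : ℝ → ℝ := fun φ => φ * Real.log (R / 2) + Cl2 (δ₂ - φ) - Cl2 (δ₁ + φ) with hF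
  have hderiv : ∀ φ ∈ Set.uIcc α β,
      HasDerivAt F (Real.log (a * Real.cos φ + b * Real.sin φ + c)) φ := by
    intro φ hφ
    rw [Set.uIcc_of_le hαβ] at hφ
    obtain ⟨⟨hA0, hA2⟩, ⟨hB0, hB2⟩⟩ := hrange φ hφ
    have hsA : 0 < Real.sin ((δ₁ + φ) / 2) := Real.sin_pos_of_pos_of_lt_pi hA0 hA2
    have hsB : 0 < Real.sin ((δ₂ - φ) / 2) := Real.sin_pos_of_pos_of_lt_pi hB0 hB2
    have hd1 : HasDerivAt (fun φ : ℝ => Cl2 (δ₁ + φ))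
        (-Real.log (2 * Real.sin ((δ₁ + φ) / 2))) φ := by
      have hinner : HasDerivAt (fun φ : ℝ => δ₁ + φ) 1 φ := (hasDerivAt_id φ).const_add δ₁
      have := (Cl2_hasDerivAt (by linarith : 0 < δ₁ + φ) (by linarith : δ₁ + φ < 2 * π)).comp φ hinner
      simpa [Function.comp_def] using this
    have hd2 : HasDerivAt (fun φ : ℝ => Cl2 (δ₂ - φ))
        (Real.log (2 * Real.sin ((δ₂ - φ) / 2))) φ := by
      have hinner : HasDerivAt (fun φ : ℝ => δ₂ - φ) (-1) φ := (hasDerivAt_id φ).const_sub δ₂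
      have := (Cl2_hasDerivAt (by linarith : 0 < δ₂ - φ) (by linarith : δ₂ - φ < 2 * π)).comp φ hinner
      simpa [Function.comp_def] using this
    have hd0 : HasDerivAt (fun φ : ℝ => φ * Real.log (R / 2)) (Real.log (R / 2)) φ :=
      hasDerivAt_mul_const _
    have htot := (hd0.add hd2).sub hd1
    have hsplit : Real.log ((R / 2) * (2 * Real.sin ((δ₁ + φ) / 2)) * (2 * Real.sin ((δ₂ - φ) / 2)))
        = Real.log (R / 2) + Real.log (2 * Real.sin ((δ₁ + φ) / 2))
          + Real.log (2 * Real.sin ((δ₂ - φ) / 2)) := by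
      rw [Real.log_mul (by positivity) (by positivity), Real.log_mul (by positivity) (by positivity)]
    have hlogeq : Real.log (R / 2) + Real.log (2 * Real.sin ((δ₂ - φ) / 2))
        - -Real.log (2 * Real.sin ((δ₁ + φ) / 2))
        = Real.log (a * Real.cos φ + b * Real.sin φ + c) := by
      rw [hkey φ, hsplit]
      ring
    rw [hlogeq] at htot
    exact htot
  have hint : IntervalIntegrable (fun φ => Real.log (a * Real.cos φ + b * Real.sin φ + c))
      MeasureTheory.volume α β := by
    apply ContinuousOn.intervalIntegrable
    rw [Set.uIcc_of_le hαβ]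
    apply ContinuousOn.log
    · apply Continuous.continuousOn
      exact ((continuous_const.mul Real.continuous_cos).add
        (continuous_const.mul Real.continuous_sin)).add continuous_const
    · intro φ hφ
      exact (hpos φ hφ).ne'
  rw [integral_eq_sub_of_hasDerivAt hderiv hint]
  simp only [hF]
  ring
end

section
/- Let a, b, c be real numbers with a² + b² > c² and a + c > 0, set s = √(a² + b² − c²), and assume b + s > 0 and −b + s > 0. Define δ₁ = 2·arctan((a + c)/(b + s)) and δ₂ = 2·arctan((a + c)/(−b + s)). Then for every real φ, a·cos(φ) + b·sin(φ) + c = 2·√(a² + b²)·sin((δ₂ − φ)/2)·sin((δ₁ + φ)/2). -/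
open Real

theorem stmt5 (a b c s δ₁ δ₂ : ℝ)
    (habc : c ^ 2 < a ^ 2 + b ^ 2) (hac : 0 < a + c)
    (hs : s = Real.sqrt (a ^ 2 + b ^ 2 - c ^ 2))
    (hbs : 0 < b + s) (hbs' : 0 < -b + s)
    (hδ₁ : δ₁ = 2 * Real.arctan ((a + c) / (b + s)))
    (hδ₂ : δ₂ = 2 * Real.arctan ((a + c) / (-b + s))) :
    ∀ φ : ℝ, a * Real.cos φ + b * Real.sin φ + c =
      2 * Real.sqrt (a ^ 2 + b ^ 2) * Real.sin ((δ₂ - φ) / 2) * Real.sin ((δ₁ + φ) / 2) := by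
  have hs2 : s ^ 2 = a ^ 2 + b ^ 2 - c ^ 2 := by
    rw [hs]; exact Real.sq_sqrt (by linarith)
  have hac' : 0 < a - c := by nlinarith [mul_pos hbs hbs']
  set u := (a + c) / (b + s) with hu
  set v := (a + c) / (-b + s) with hv
  have h1 : (0:ℝ) < 1 + u ^ 2 := by positivity
  have h2 : (0:ℝ) < 1 + v ^ 2 := by positivity
  set r := Real.sqrt (a ^ 2 + b ^ 2) with hrdef
  have hrpos : 0 < r := Real.sqrt_pos.2 (by nlinarith)
  have hr2 : r ^ 2 = a ^ 2 + b ^ 2 := Real.sq_sqrt (by nlinarith)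
  have key : ((b+s)^2+(a+c)^2)*((-b+s)^2+(a+c)^2) = 4*(a^2+b^2)*(a+c)^2 := by
    linear_combination (s^2 + a^2 + b^2 - c^2 + 2*(a+c)^2 - 2*b^2) * hs2
  have hprod : (1 + u ^ 2) * (1 + v ^ 2) = (2 * r / (a - c)) ^ 2 := by
    rw [hu, hv]
    field_simp
    linear_combination (a-c)^2 * key - 4*(b+s)^2*(-b+s)^2 * hr2 -
      4*(a^2+b^2)*(a^2-c^2+s^2-b^2) * hs2
  have hD : Real.sqrt (1 + u ^ 2) * Real.sqrt (1 + v ^ 2) = 2 * r / (a - c) := by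
    rw [← Real.sqrt_mul h1.le, hprod, Real.sqrt_sq (by positivity)]
  set C1 := Real.cos (Real.arctan u) with hC1
  set C2 := Real.cos (Real.arctan v) with hC2
  set S1 := Real.sin (Real.arctan u) with hS1
  set S2 := Real.sin (Real.arctan v) with hS2
  have hCC : r * (C1 * C2) = (a - c) / 2 := by
    rw [hC1, hC2, Real.cos_arctan, Real.cos_arctan]
    rw [div_mul_div_comm, one_mul, hD]
    rw [one_div_div]
    field_simp
  have huv : u * v = (a + c) / (a - c) := by
    rw [hu, hv]
    field_simp
    linear_combination -1 * hs2
  have hvu : v - u = 2 * b / (a - c) := by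
    rw [hu, hv]
    field_simp
    linear_combination -2 * b * hs2
  have hSS : r * (S1 * S2) = (a + c) / 2 := by
    rw [hS1, hS2, Real.sin_arctan, Real.sin_arctan]
    rw [div_mul_div_comm, hD]
    rw [div_div_eq_mul_div, huv]
    field_simp
  have hX : r * (S2 * C1 - S1 * C2) = b := by
    rw [hS1, hS2, hC1, hC2, Real.sin_arctan, Real.sin_arctan,
      Real.cos_arctan, Real.cos_arctan]
    have hsq1 : Real.sqrt (1 + u ^ 2) ≠ 0 := by positivity
    have hsq2 : Real.sqrt (1 + v ^ 2) ≠ 0 := by positivity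
    have : v / Real.sqrt (1 + v ^ 2) * (1 / Real.sqrt (1 + u ^ 2)) -
        u / Real.sqrt (1 + u ^ 2) * (1 / Real.sqrt (1 + v ^ 2)) =
        (v - u) / (Real.sqrt (1 + u ^ 2) * Real.sqrt (1 + v ^ 2)) := by
      field_simp
    rw [this, hD, hvu]
    field_simp
  intro φ
  rw [hδ₁, hδ₂]
  have e2 : (2 * Real.arctan v - φ) / 2 = Real.arctan v - φ / 2 := by ring
  have e1 : (2 * Real.arctan u + φ) / 2 = Real.arctan u + φ / 2 := by ring
  rw [e2, e1, Real.sin_sub, Real.sin_add, ← hS1, ← hS2, ← hC1, ← hC2]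
  set cp := Real.cos (φ / 2) with hcp
  set sp := Real.sin (φ / 2) with hsp
  have hpy : sp ^ 2 + cp ^ 2 = 1 := Real.sin_sq_add_cos_sq (φ / 2)
  have hφc : Real.cos φ = cp * cp - sp * sp := by
    rw [hcp, hsp, ← Real.cos_add]
    congr 1
    ring
  have hφs : Real.sin φ = sp * cp + cp * sp := by
    rw [hcp, hsp, ← Real.sin_add]
    congr 1
    ring
  rw [hφc, hφs]
  linear_combination (-2*cp^2) * hSS - 2*sp*cp * hX + 2*sp^2 * hCC - c * hpy
end

section
/- Let δ, α, β be real numbers with −π/2 < δ < α ≤ β < π/2. Then ∫_α^β log(tan(φ) − tan(δ)) dφ = (1/2)·( Cl₂(2α − 2δ) − Cl₂(2β − 2δ) + Cl₂(π − 2α) − Cl₂(π − 2β) ) − (β − α)·log(cos(δ)). -/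
open Real

open Filter Finset Topology

lemma geom_bound (z : ℂ) (hz : ‖z‖ = 1) (h1 : z ≠ 1) (N : ℕ) :
    ‖∑ n ∈ range N, z ^ (n + 1)‖ ≤ 2 / ‖1 - z‖ := by
  have : ∑ n ∈ range N, z ^ (n + 1) = z * ((z ^ N - 1) / (z - 1)) := by
    rw [← geom_sum_eq h1, Finset.mul_sum]
    exact Finset.sum_congr rfl fun n _ => by ring
  rw [this, norm_mul, hz, one_mul, norm_div, norm_sub_rev (1 : ℂ) z]
  gcongr
  calc ‖z ^ N - 1‖ ≤ ‖z ^ N‖ + ‖(1 : ℂ)‖ := norm_sub_le _ _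
    _ = 2 := by rw [norm_pow, hz, norm_one]; norm_num

lemma nat_norm_inv_le (k : ℕ) : ‖(1 : ℂ) / ((k : ℂ) + 1)‖ ≤ 1 := by
  rw [norm_div, norm_one]
  have e : ((k : ℂ) + 1) = ((k + 1 : ℕ) : ℂ) := by push_cast; ring
  rw [e, Complex.norm_natCast]
  rw [div_le_one (by positivity)]
  exact_mod_cast Nat.one_le_iff_ne_zero.mpr (Nat.succ_ne_zero k)

lemma partial_bound (z : ℂ) (hz : ‖z‖ = 1) (h1 : z ≠ 1) (N : ℕ) :
    ‖∑ n ∈ range N, z ^ (n + 1) / (n + 1)‖ ≤ 4 / ‖1 - z‖ := by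
  have hB : (0:ℝ) < ‖1 - z‖ := by
    rw [norm_pos_iff]; exact sub_ne_zero.mpr (Ne.symm h1)
  have key := Finset.sum_range_by_parts (fun n : ℕ => (1 : ℂ) / (n + 1)) (fun n => z ^ (n + 1)) N
  simp only [smul_eq_mul] at key
  have e : ∑ n ∈ range N, z ^ (n + 1) / (n + 1)
      = ∑ n ∈ range N, (1 : ℂ) / (n + 1) * z ^ (n + 1) :=
    Finset.sum_congr rfl fun n _ => by ring
  rw [e, key]
  have h1' : ‖(1 : ℂ) / ((N - 1 : ℕ) + 1) * ∑ i ∈ range N, z ^ (i + 1)‖ ≤ 1 * (2 / ‖1 - z‖) := by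
    rw [norm_mul]
    exact mul_le_mul (nat_norm_inv_le _) (geom_bound z hz h1 N) (norm_nonneg _) zero_le_one
  have h2' : ‖∑ i ∈ range (N - 1),
      ((1 : ℂ) / ((i + 1 : ℕ) + 1) - 1 / (i + 1)) * ∑ j ∈ range (i + 1), z ^ (j + 1)‖
      ≤ 2 / ‖1 - z‖ := by
    calc ‖∑ i ∈ range (N - 1), ((1 : ℂ) / ((i + 1 : ℕ) + 1) - 1 / (i + 1))
            * ∑ j ∈ range (i + 1), z ^ (j + 1)‖
        ≤ ∑ i ∈ range (N - 1), ((1 : ℝ) / (i + 1) - 1 / (i + 2)) * (2 / ‖1 - z‖) := by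
          refine (norm_sum_le _ _).trans (Finset.sum_le_sum fun i _ => ?_)
          rw [norm_mul]
          refine mul_le_mul ?_ (geom_bound z hz h1 _) (norm_nonneg _) ?_
          · have e2 : (1 : ℂ) / ((i + 1 : ℕ) + 1) - 1 / (i + 1)
                = -(((1 : ℝ) / (i + 1) - 1 / (i + 2) : ℝ) : ℂ) := by
              push_cast
              ring
            rw [e2, norm_neg, Complex.norm_real, Real.norm_eq_abs, abs_of_nonneg]
            have : (0:ℝ) < (i:ℝ) + 1 := by positivity
            have : (0:ℝ) < (i:ℝ) + 2 := by positivity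
            rw [sub_nonneg, div_le_div_iff₀ (by positivity) (by positivity)]
            nlinarith
          · rw [sub_nonneg, div_le_div_iff₀ (by positivity) (by positivity)]
            nlinarith [Nat.cast_nonneg (α := ℝ) i]
      _ = (∑ i ∈ range (N - 1), ((1 : ℝ) / (i + 1) - 1 / (i + 2))) * (2 / ‖1 - z‖) := by
          rw [Finset.sum_mul]
      _ ≤ 1 * (2 / ‖1 - z‖) := by
          gcongr
          calc ∑ i ∈ range (N - 1), ((1 : ℝ) / (i + 1) - 1 / (i + 2))
              = ∑ i ∈ range (N - 1),
                  ((fun k : ℕ => (1:ℝ)/(k + 1)) i - (fun k : ℕ => (1:ℝ)/(k + 1)) (i+1)) :=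
                Finset.sum_congr rfl fun i _ => by push_cast; ring
            _ = (fun k : ℕ => (1:ℝ)/(k + 1)) 0 - (fun k : ℕ => (1:ℝ)/(k + 1)) (N - 1) :=
                Finset.sum_range_sub' _ _
            _ ≤ 1 := by
                simp only
                have : (0:ℝ) ≤ 1 / (((N - 1 : ℕ) : ℝ) + 1) := by positivity
                norm_num
                linarith
      _ = 2 / ‖1 - z‖ := one_mul _
  calc ‖_ - _‖ ≤ ‖(1 : ℂ) / ((N - 1 : ℕ) + 1) * ∑ i ∈ range N, z ^ (i + 1)‖ +
        ‖∑ i ∈ range (N - 1), ((1 : ℂ) / ((i + 1 : ℕ) + 1) - 1 / (i + 1))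
          * ∑ j ∈ range (i + 1), z ^ (j + 1)‖ := norm_sub_le _ _
    _ ≤ 1 * (2 / ‖1 - z‖) + 2 / ‖1 - z‖ := add_le_add h1' h2'
    _ = 4 / ‖1 - z‖ := by ring

lemma tendsto_partial (z : ℂ) (hz : ‖z‖ = 1) (h1 : z ≠ 1) :
    Tendsto (fun N => ∑ n ∈ range N, z ^ (n + 1) / (n + 1)) atTop
      (𝓝 (-Complex.log (1 - z))) := by
  have hz1 : (1 : ℂ) - z ≠ 0 := sub_ne_zero.mpr (Ne.symm h1)
  -- Step 1: partial sums converge to some l (Dirichlet test)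
  have hcauchy : CauchySeq fun N => ∑ n ∈ range N, z ^ (n + 1) / (n + 1) := by
    have hfa : Antitone fun n : ℕ => (1 : ℝ) / (n + 1) := by
      intro m n hmn
      have h0 : (0:ℝ) < (m:ℝ) + 1 := by positivity
      apply one_div_le_one_div_of_le h0
      have : (m:ℝ) ≤ n := by exact_mod_cast hmn
      linarith
    have hf0 : Tendsto (fun n : ℕ => (1 : ℝ) / (n + 1)) atTop (𝓝 0) :=
      tendsto_one_div_add_atTop_nhds_zero_nat
    have H := hfa.cauchySeq_series_mul_of_tendsto_zero_of_bounded hf0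
      (geom_bound z hz h1)
    have e : (fun n => ∑ i ∈ range n, ((1 : ℝ) / (i + 1)) • z ^ (i + 1))
        = fun N => ∑ n ∈ range N, z ^ (n + 1) / (n + 1) := by
      funext N
      refine Finset.sum_congr rfl fun n _ => ?_
      rw [Complex.real_smul]
      push_cast
      ring
    rwa [e] at H
  obtain ⟨l, hl⟩ := cauchySeq_tendsto_of_complete hcauchy
  -- Step 2: identify l via Abel's limit theorem
  set F : ℕ → ℂ := fun n => z ^ n / n with hF
  have hF0 : F 0 = 0 := by simp [hF]
  have hl' : Tendsto (fun N => ∑ i ∈ range N, F i) atTop (𝓝 l) := by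
    rw [← tendsto_add_atTop_iff_nat 1]
    have e : ∀ N, ∑ i ∈ range (N + 1), F i = ∑ n ∈ range N, z ^ (n + 1) / (n + 1) := by
      intro N
      rw [Finset.sum_range_succ']
      simp [hF0]
      refine Finset.sum_congr rfl fun n _ => ?_
      simp only [hF]
      push_cast
      ring
    simpa only [e] using hl
  have habel := Complex.tendsto_tsum_powerSeries_nhdsWithin_lt hl'
  rw [tendsto_map'_iff] at habel
  -- the other limit
  have hcont : Tendsto (fun x : ℝ => ∑' n, F n * (x : ℂ) ^ n) (𝓝[<] (1:ℝ))
      (𝓝 (-Complex.log (1 - z))) := by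
    have h2 : Tendsto (fun x : ℝ => -Complex.log (1 - (x : ℂ) * z)) (𝓝[<] (1:ℝ))
        (𝓝 (-Complex.log (1 - z))) := by
      have hcl : ContinuousAt Complex.log (1 - z) := by
        apply continuousAt_clog
        rw [Complex.mem_slitPlane_iff]
        rcases eq_or_ne z.im 0 with him | him
        · left
          have hsq : z.re ^ 2 = 1 := by
            have h2 := Complex.sq_norm z
            rw [Complex.normSq_apply, him] at h2
            have h3 : ‖z‖ = 1 := by rw [hz]
            rw [h3] at h2
            nlinarith
          have : z.re = 1 ∨ z.re = -1 := by
            rcases mul_eq_zero.mp (show (z.re - 1) * (z.re + 1) = 0 by nlinarith) with h | h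
            · left; linarith
            · right; linarith
          rcases this with h | h
          · exfalso; apply h1; apply Complex.ext <;> simp [h, him]
          · simp [Complex.sub_re, h]
        · right; simpa [Complex.sub_im] using him
      have hinner : ContinuousAt (fun x : ℝ => 1 - (x : ℂ) * z) 1 := by fun_prop
      have hcl' : ContinuousAt Complex.log ((fun x : ℝ => 1 - (x : ℂ) * z) 1) := by
        have e : (1 - ((1:ℝ):ℂ) * z) = 1 - z := by push_cast; ring
        simp only [e]
        exact hcl
      have hc2 : ContinuousAt (fun x : ℝ => Complex.log (1 - (x : ℂ) * z)) 1 :=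
        ContinuousAt.comp (g := Complex.log) (f := fun x : ℝ => 1 - (x : ℂ) * z) hcl' hinner
      have h3 := (hc2.neg.continuousWithinAt (s := Set.Iio (1:ℝ))).tendsto
      convert h3 using 2
      all_goals simp only [Pi.neg_def, Complex.ofReal_one, one_mul]
    refine h2.congr' ?_
    filter_upwards [Ioo_mem_nhdsLT_of_mem (by norm_num : (1:ℝ) ∈ Set.Ioc 0 1)] with x hx
    have hxz : ‖(x : ℂ) * z‖ < 1 := by
      rw [norm_mul, hz, mul_one, Complex.norm_real, Real.norm_eq_abs,
        abs_of_pos hx.1]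
      exact hx.2
    have := Complex.hasSum_taylorSeries_neg_log hxz
    rw [← this.tsum_eq]
    refine tsum_congr fun n => ?_
    simp only [hF, mul_pow]
    ring
  have := tendsto_nhds_unique habel hcont
  rwa [this] at hl

lemma abs_one_sub_exp (t : ℝ) (ht : 0 < t) (ht' : t < π) :
    ‖1 - Complex.exp ((2 * t : ℝ) * Complex.I)‖ = 2 * Real.sin t := by
  have hre : (1 - Complex.exp ((2 * t : ℝ) * Complex.I)).re = 1 - Real.cos (2 * t) := by
    rw [Complex.sub_re, Complex.one_re, Complex.exp_ofReal_mul_I_re]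
  have him : (1 - Complex.exp ((2 * t : ℝ) * Complex.I)).im = -Real.sin (2 * t) := by
    rw [Complex.sub_im, Complex.one_im, Complex.exp_ofReal_mul_I_im, zero_sub]
  have hsin : 0 < Real.sin t := Real.sin_pos_of_pos_of_lt_pi ht ht'
  rw [Complex.norm_def, Complex.normSq_apply, hre, him]
  have key : (1 - Real.cos (2 * t)) * (1 - Real.cos (2 * t)) +
      -Real.sin (2 * t) * -Real.sin (2 * t) = (2 * Real.sin t) ^ 2 := by
    have h1 := Real.sin_sq_add_cos_sq (2 * t)
    have h2 := Real.cos_two_mul t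
    have h3 := Real.sin_sq_add_cos_sq t
    nlinarith
  rw [key, Real.sqrt_sq (by positivity)]

lemma cos_sum (t : ℝ) (ht : 0 < t) (ht' : t < π) :
    Tendsto (fun N => ∑ n ∈ range N, Real.cos (2 * (n + 1) * t) / (n + 1)) atTop
      (𝓝 (-Real.log (2 * Real.sin t))) := by
  set z : ℂ := Complex.exp ((2 * t : ℝ) * Complex.I) with hzdef
  have hz : ‖z‖ = 1 := by
    rw [hzdef]
    exact Complex.norm_exp_ofReal_mul_I _
  have h1 : z ≠ 1 := by
    intro h
    have : Real.cos (2 * t) = 1 := by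
      have h' := congrArg Complex.re h
      rwa [Complex.exp_ofReal_mul_I_re, Complex.one_re] at h'
    rw [Real.cos_eq_one_iff_of_lt_of_lt (by linarith [Real.pi_pos]) (by linarith)] at this
    linarith
  have H := (tendsto_partial z hz h1).comp (tendsto_id (α := ℕ))
  have Hre := (Complex.continuous_re.tendsto _).comp (tendsto_partial z hz h1)
  have e1 : (Complex.re ∘ fun N => ∑ n ∈ range N, z ^ (n + 1) / (n + 1))
      = fun N => ∑ n ∈ range N, Real.cos (2 * (n + 1) * t) / (n + 1) := by
    funext N
    simp only [Function.comp_apply, Complex.re_sum]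
    refine Finset.sum_congr rfl fun n _ => ?_
    have hzpow : z ^ (n + 1) = Complex.exp ((2 * (n + 1) * t : ℝ) * Complex.I) := by
      rw [hzdef, ← Complex.exp_nat_mul]
      congr 1
      push_cast
      ring
    have hcast : ((n : ℂ) + 1) = (((n : ℝ) + 1 : ℝ) : ℂ) := by push_cast; ring
    rw [hzpow, hcast, Complex.div_ofReal_re, Complex.exp_ofReal_mul_I_re]
  have e2 : (-Complex.log (1 - z)).re = -Real.log (2 * Real.sin t) := by
    rw [Complex.neg_re, Complex.log_re, abs_one_sub_exp t ht ht']
  rw [e1, e2] at Hre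
  exact Hre

lemma re_partial (t : ℝ) (N : ℕ) :
    ∑ n ∈ range N, Real.cos (2 * (n + 1) * t) / (n + 1)
      = (∑ n ∈ range N, Complex.exp ((2 * t : ℝ) * Complex.I) ^ (n + 1) / (n + 1)).re := by
  rw [Complex.re_sum]
  refine Finset.sum_congr rfl fun n _ => ?_
  have hzpow : Complex.exp ((2 * t : ℝ) * Complex.I) ^ (n + 1)
      = Complex.exp ((2 * (n + 1) * t : ℝ) * Complex.I) := by
    rw [← Complex.exp_nat_mul]
    congr 1
    push_cast
    ring
  have hcast : ((n : ℂ) + 1) = (((n : ℝ) + 1 : ℝ) : ℂ) := by push_cast; ring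
  rw [hzpow, hcast, Complex.div_ofReal_re, Complex.exp_ofReal_mul_I_re]

lemma summable_sin (x : ℝ) : Summable (fun n : ℕ => Real.sin (((n : ℝ) + 1) * x) / ((n : ℝ) + 1) ^ 2) := by
  have hs : Summable (fun n : ℕ => 1 / ((n : ℝ) + 1) ^ 2) := by
    have := (summable_nat_add_iff 1).mpr (Real.summable_one_div_nat_pow.mpr one_lt_two)
    refine this.congr fun n => ?_
    push_cast
    ring
  refine Summable.of_norm_bounded hs fun n => ?_
  rw [Real.norm_eq_abs, abs_div, abs_of_nonneg (by positivity : (0:ℝ) ≤ ((n:ℝ)+1)^2)]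
  gcongr
  exact Real.abs_sin_le_one _

lemma hasSum_Cl2 (x : ℝ) :
    HasSum (fun n : ℕ => Real.sin (((n : ℝ) + 1) * x) / ((n : ℝ) + 1) ^ 2) (Cl2 x) :=
  (summable_sin x).hasSum

lemma integral_log_two_sin (a b : ℝ) (ha : 0 < a) (hb : b < π) (hab : a ≤ b) :
    ∫ t in a..b, Real.log (2 * Real.sin t) = (Cl2 (2 * a) - Cl2 (2 * b)) / 2 := by
  -- continuity facts
  have hsinpos : ∀ t ∈ Set.Icc a b, 0 < Real.sin t := fun t ht =>
    Real.sin_pos_of_pos_of_lt_pi (lt_of_lt_of_le ha ht.1) (lt_of_le_of_lt ht.2 hb)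
  have huIcc : Set.uIcc a b = Set.Icc a b := Set.uIcc_of_le hab
  -- Step 1: DCT
  have hdct : Tendsto (fun N => ∫ t in a..b, ∑ n ∈ range N, Real.cos (2 * (n + 1) * t) / (n + 1))
      atTop (𝓝 (∫ t in a..b, -Real.log (2 * Real.sin t))) := by
    apply intervalIntegral.tendsto_integral_filter_of_dominated_convergence
      (fun t => 2 / Real.sin t)
    · refine Eventually.of_forall fun N => ?_
      apply Continuous.aestronglyMeasurable
      continuity
    · refine Eventually.of_forall fun N => ?_
      refine Eventually.of_forall fun t ht => ?_
      have htIcc : t ∈ Set.Icc a b := Set.uIoc_of_le hab ▸ ht |> fun h => ⟨le_of_lt h.1, h.2⟩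
      have ht0 : 0 < t := lt_of_lt_of_le ha htIcc.1
      have htpi : t < π := lt_of_le_of_lt htIcc.2 hb
      have hz : ‖Complex.exp ((2 * t : ℝ) * Complex.I)‖ = 1 := by
        exact Complex.norm_exp_ofReal_mul_I _
      have h1 : Complex.exp ((2 * t : ℝ) * Complex.I) ≠ 1 := by
        intro h
        have h' := congrArg Complex.re h
        rw [Complex.exp_ofReal_mul_I_re, Complex.one_re] at h'
        rw [Real.cos_eq_one_iff_of_lt_of_lt (by linarith [Real.pi_pos]) (by linarith)] at h'
        linarith
      calc ‖∑ n ∈ range N, Real.cos (2 * (n + 1) * t) / (n + 1)‖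
          = ‖(∑ n ∈ range N, Complex.exp ((2 * t : ℝ) * Complex.I) ^ (n + 1) / (n + 1)).re‖ := by
            rw [re_partial]
        _ ≤ ‖∑ n ∈ range N, Complex.exp ((2 * t : ℝ) * Complex.I) ^ (n + 1) / (n + 1)‖ :=
            Complex.abs_re_le_norm _
        _ ≤ 4 / ‖1 - Complex.exp ((2 * t : ℝ) * Complex.I)‖ := partial_bound _ hz h1 N
        _ = 4 / (2 * Real.sin t) := by rw [abs_one_sub_exp t ht0 htpi]
        _ = 2 / Real.sin t := by
            have hs := hsinpos t htIcc
            rw [div_eq_div_iff (by linarith) (by linarith)]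
            ring
    · apply ContinuousOn.intervalIntegrable
      rw [huIcc]
      exact continuousOn_const.div Real.continuous_sin.continuousOn
        fun t ht => ne_of_gt (hsinpos t ht)
    · refine Eventually.of_forall fun t ht => ?_
      have htIcc : t ∈ Set.Icc a b := Set.uIoc_of_le hab ▸ ht |> fun h => ⟨le_of_lt h.1, h.2⟩
      exact cos_sum t (lt_of_lt_of_le ha htIcc.1) (lt_of_le_of_lt htIcc.2 hb)
  -- Step 2: compute the integral of partial sums
  have hint : ∀ N, (∫ t in a..b, ∑ n ∈ range N, Real.cos (2 * (n + 1) * t) / (n + 1))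
      = ∑ n ∈ range N, (Real.sin (((n:ℝ) + 1) * (2 * b)) / ((n:ℝ) + 1) ^ 2
          - Real.sin (((n:ℝ) + 1) * (2 * a)) / ((n:ℝ) + 1) ^ 2) / 2 := by
    intro N
    rw [intervalIntegral.integral_finset_sum]
    · refine Finset.sum_congr rfl fun n _ => ?_
      have hc : (2 * ((n:ℝ) + 1)) ≠ 0 := by positivity
      have e1 : ∀ t : ℝ, Real.cos (2 * ((n:ℝ) + 1) * t) / ((n:ℝ) + 1)
          = (1 / ((n:ℝ) + 1)) * Real.cos (2 * ((n:ℝ) + 1) * t) := fun t => by ring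
      simp_rw [e1]
      rw [intervalIntegral.integral_const_mul]
      rw [intervalIntegral.integral_comp_mul_left (fun x => Real.cos x) hc]
      rw [integral_cos]
      field_simp
      ring_nf
      have h2n : (2 + (n:ℝ) * 2) ≠ 0 := by positivity
      field_simp
      ring
    · intro n _
      apply Continuous.intervalIntegrable
      continuity
  -- Step 3: the series limit
  have hsum : Tendsto (fun N => ∑ n ∈ range N,
      (Real.sin (((n:ℝ) + 1) * (2 * b)) / ((n:ℝ) + 1) ^ 2
        - Real.sin (((n:ℝ) + 1) * (2 * a)) / ((n:ℝ) + 1) ^ 2) / 2) atTop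
      (𝓝 ((Cl2 (2 * b) - Cl2 (2 * a)) / 2)) := by
    exact (((hasSum_Cl2 (2 * b)).sub (hasSum_Cl2 (2 * a))).div_const 2).tendsto_sum_nat
  rw [funext hint] at hdct
  have := tendsto_nhds_unique hdct hsum
  rw [intervalIntegral.integral_neg] at this
  linarith

theorem stmt6 (δ α β : ℝ) (hδ : -(π / 2) < δ) (hδα : δ < α) (hαβ : α ≤ β) (hβ : β < π / 2) :
    ∫ φ in α..β, Real.log (Real.tan φ - Real.tan δ) =
      (1 / 2) * (Cl2 (2 * α - 2 * δ) - Cl2 (2 * β - 2 * δ) + Cl2 (π - 2 * α) - Cl2 (π - 2 * β))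
        - (β - α) * Real.log (Real.cos δ) := by
  have hπ := Real.pi_pos
  have hcosδ : 0 < Real.cos δ := Real.cos_pos_of_mem_Ioo ⟨hδ, by linarith⟩
  have huIcc : Set.uIcc α β = Set.Icc α β := Set.uIcc_of_le hαβ
  -- pointwise rewrite of the integrand
  have heq : Set.EqOn (fun φ => Real.log (Real.tan φ - Real.tan δ))
      (fun φ => Real.log (2 * Real.sin (φ - δ)) - Real.log (2 * Real.sin (π / 2 - φ))
        - Real.log (Real.cos δ)) (Set.uIcc α β) := by
    rw [huIcc]
    intro φ hφ
    have hφ1 : δ < φ := lt_of_lt_of_le hδα hφ.1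
    have hφ2 : φ < π / 2 := lt_of_le_of_lt hφ.2 hβ
    have hcosφ : 0 < Real.cos φ := Real.cos_pos_of_mem_Ioo ⟨by linarith, hφ2⟩
    have hsin : 0 < Real.sin (φ - δ) :=
      Real.sin_pos_of_pos_of_lt_pi (by linarith) (by linarith)
    have key : Real.tan φ - Real.tan δ = Real.sin (φ - δ) / (Real.cos φ * Real.cos δ) := by
      rw [Real.tan_eq_sin_div_cos, Real.tan_eq_sin_div_cos, Real.sin_sub]
      field_simp
    simp only
    rw [key, Real.log_div (ne_of_gt hsin) (by positivity),
      Real.log_mul (ne_of_gt hcosφ) (ne_of_gt hcosδ),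
      Real.log_mul two_ne_zero (ne_of_gt hsin), Real.sin_pi_div_two_sub,
      Real.log_mul two_ne_zero (ne_of_gt hcosφ)]
    ring
  rw [intervalIntegral.integral_congr heq]
  -- integrability of the two pieces
  have hint1 : IntervalIntegrable (fun φ => Real.log (2 * Real.sin (φ - δ))) MeasureTheory.volume α β := by
    apply ContinuousOn.intervalIntegrable
    rw [huIcc]
    apply ContinuousOn.log
    · fun_prop
    · intro φ hφ
      have : 0 < Real.sin (φ - δ) := Real.sin_pos_of_pos_of_lt_pi
        (by linarith [lt_of_lt_of_le hδα hφ.1]) (by linarith [lt_of_le_of_lt hφ.2 hβ])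
      positivity
  have hint2 : IntervalIntegrable (fun φ => Real.log (2 * Real.sin (π / 2 - φ))) MeasureTheory.volume α β := by
    apply ContinuousOn.intervalIntegrable
    rw [huIcc]
    apply ContinuousOn.log
    · fun_prop
    · intro φ hφ
      have : 0 < Real.sin (π / 2 - φ) := Real.sin_pos_of_pos_of_lt_pi
        (by linarith [lt_of_le_of_lt hφ.2 hβ]) (by linarith [lt_of_lt_of_le hδα hφ.1])
      positivity
  rw [intervalIntegral.integral_sub (hint1.sub hint2) intervalIntegrable_const,
    intervalIntegral.integral_sub hint1 hint2,
    intervalIntegral.integral_const]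
  -- substitutions
  have e1 : (∫ φ in α..β, Real.log (2 * Real.sin (φ - δ)))
      = (Cl2 (2 * α - 2 * δ) - Cl2 (2 * β - 2 * δ)) / 2 := by
    rw [intervalIntegral.integral_comp_sub_right (fun t => Real.log (2 * Real.sin t)) δ]
    rw [integral_log_two_sin (α - δ) (β - δ) (by linarith) (by linarith) (by linarith)]
    rw [show 2 * (α - δ) = 2 * α - 2 * δ by ring, show 2 * (β - δ) = 2 * β - 2 * δ by ring]
  have e2 : (∫ φ in α..β, Real.log (2 * Real.sin (π / 2 - φ)))
      = (Cl2 (π - 2 * β) - Cl2 (π - 2 * α)) / 2 := by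
    rw [intervalIntegral.integral_comp_sub_left (fun t => Real.log (2 * Real.sin t)) (π / 2)]
    rw [integral_log_two_sin (π / 2 - β) (π / 2 - α) (by linarith) (by linarith) (by linarith)]
    rw [show 2 * (π / 2 - β) = π - 2 * β by ring, show 2 * (π / 2 - α) = π - 2 * α by ring]
  rw [e1, e2]
  simp only [smul_eq_mul]
  ring
end

section
/- Let α, β be real numbers with −π/2 < α ≤ β < π/2. Then ∫_α^β log(2·cos(φ)) dφ = (1/2)·( Cl₂(π − 2β) − Cl₂(π − 2α) ). -/
open Real


lemma hasSumLog (r θ : ℝ) (hr : |r| < 1) :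
    HasSum (fun n : ℕ => (-1)^n * r^(n+1) * Real.cos (((n:ℝ)+1)*θ) / ((n:ℝ)+1))
      ((1/2) * Real.log (1 + 2*r*Real.cos θ + r^2)) := by
  set z : ℂ := (r : ℂ) * Complex.exp ((θ:ℂ) * Complex.I) with hz
  have hznorm : ‖z‖ < 1 := by
    simp [hz, map_mul, Complex.norm_exp, hr]
  have h := Complex.hasSum_taylorSeries_log hznorm
  have h1 : HasSum (fun n : ℕ => (-1:ℂ)^(n+1+1) * z^(n+1) / ((n:ℂ)+1)) (Complex.log (1+z)) := by
    have := (hasSum_nat_add_iff' (f := fun n : ℕ => (-1:ℂ)^(n+1) * z^n / n) 1).mpr h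
    simpa using this
  have h2 := Complex.hasSum_re h1
  have hterm : ∀ n : ℕ, ((-1:ℂ)^(n+1+1) * z^(n+1) / ((n:ℂ)+1)).re
      = (-1)^n * r^(n+1) * Real.cos (((n:ℝ)+1)*θ) / ((n:ℝ)+1) := by
    intro n
    have hzp : z^(n+1) = ((r^(n+1) : ℝ) : ℂ) * Complex.exp ((((n:ℝ)+1)*θ : ℝ) * Complex.I) := by
      rw [hz, mul_pow, ← Complex.exp_nat_mul]
      push_cast
      ring_nf
    have key : (-1:ℂ)^(n+1+1) * z^(n+1) / ((n:ℂ)+1)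
        = ((((-1)^n * r^(n+1) / ((n:ℝ)+1)) : ℝ) : ℂ)
          * Complex.exp ((((n:ℝ)+1)*θ : ℝ) * Complex.I) := by
      rw [hzp]
      push_cast
      have hne : ((n:ℂ)+1) ≠ 0 := by
        exact_mod_cast n.succ_ne_zero
      field_simp
      ring
    rw [key, Complex.re_ofReal_mul, Complex.exp_ofReal_mul_I_re]
    ring
  simp only [hterm] at h2
  have hre : (Complex.log (1+z)).re = (1/2) * Real.log (1 + 2*r*Real.cos θ + r^2) := by
    rw [Complex.log_re]
    have habs : ‖1+z‖ = Real.sqrt (1 + 2*r*Real.cos θ + r^2) := by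
      rw [Complex.norm_def]
      congr 1
      rw [Complex.normSq_apply]
      simp only [hz, Complex.add_re, Complex.add_im, Complex.one_re, Complex.one_im,
        Complex.re_ofReal_mul, Complex.im_ofReal_mul, Complex.exp_ofReal_mul_I_re,
        Complex.exp_ofReal_mul_I_im]
      nlinarith [Real.sin_sq_add_cos_sq θ]
    rw [habs, Real.log_sqrt]
    · ring
    · nlinarith [Real.sin_sq_add_cos_sq θ, abs_lt.mp hr, sq_nonneg (r + Real.cos θ), sq_nonneg (1-r), Real.neg_one_le_cos θ, sq_nonneg r]
  rwa [hre] at h2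


lemma integral_cos_mul' (k a b : ℝ) (hk : k ≠ 0) :
    ∫ x in a..b, Real.cos (k*x) = (Real.sin (k*b) - Real.sin (k*a))/k := by
  rw [intervalIntegral.integral_comp_mul_left (fun x => Real.cos x) hk, integral_cos]
  simp [smul_eq_mul]
  ring

lemma summable_inv_sq : Summable (fun n : ℕ => 1 / ((n:ℝ)+1)^2) := by
  have := Real.summable_one_div_nat_pow.mpr (by norm_num : 1 < 2)
  have h2 := (summable_nat_add_iff (f := fun n : ℕ => 1 / (n:ℝ)^2) 1).mpr this
  refine h2.congr fun n => ?_
  push_cast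
  ring_nf


theorem stmt7 (α β : ℝ) (hα : -(π / 2) < α) (hαβ : α ≤ β) (hβ : β < π / 2) :
    ∫ φ in α..β, Real.log (2 * Real.cos φ) =
      (1 / 2) * (Cl2 (π - 2 * β) - Cl2 (π - 2 * α)) := by
  have hπ : 0 < π := pi_pos
  have hcos : ∀ φ ∈ Set.Icc α β, 0 < Real.cos φ := fun φ hφ =>
    Real.cos_pos_of_mem_Ioo ⟨lt_of_lt_of_le hα hφ.1, lt_of_le_of_lt hφ.2 hβ⟩
  set m : ℝ := min (Real.cos (2*α)) (Real.cos (2*β)) with hm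
  have habs : ∀ x : ℝ, -(π/2) < x → x < π/2 → -1 < Real.cos (2*x) := by
    intro x h1 h2
    rw [← Real.cos_abs (2*x), ← Real.cos_pi]
    apply Real.cos_lt_cos_of_nonneg_of_le_pi (abs_nonneg _) le_rfl
    rw [abs_lt]; constructor <;> linarith
  have hm1 : -1 < m := lt_min (habs α hα (lt_of_le_of_lt hαβ hβ)) (habs β (lt_of_lt_of_le hα hαβ) hβ)
  have hm2 : ∀ φ ∈ Set.Icc α β, m ≤ Real.cos (2*φ) := by
    intro φ hφ
    rcases le_or_gt 0 φ with h0 | h0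
    · refine le_trans (min_le_right _ _) ?_
      exact Real.cos_le_cos_of_nonneg_of_le_pi (by linarith) (by linarith) (by linarith [hφ.2])
    · refine le_trans (min_le_left _ _) ?_
      rw [← Real.cos_neg (2*α), ← Real.cos_neg (2*φ)]
      exact Real.cos_le_cos_of_nonneg_of_le_pi (by linarith) (by linarith) (by linarith [hφ.1])
  set c : ℝ := min (1/4) (1+m) with hcdef
  have hc : 0 < c := lt_min (by norm_num) (by linarith)
  have hkey : ∀ r : ℝ, 0 ≤ r → r ≤ 1 → ∀ φ ∈ Set.Icc α β,
      c ≤ 1 + 2*r*Real.cos (2*φ) + r^2 := by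
    intro r hr0 hr1 φ hφ
    have h1 := hm2 φ hφ
    rcases le_or_gt r (1/2) with h | h
    · refine le_trans (min_le_left _ _) ?_
      nlinarith [Real.neg_one_le_cos (2*φ)]
    · refine le_trans (min_le_right _ _) ?_
      nlinarith
  -- the summand functions
  set g : ℕ → ℝ → ℝ := fun n r =>
    (-1)^n * r^(n+1) * (Real.sin (2*((n:ℝ)+1)*β) - Real.sin (2*((n:ℝ)+1)*α)) / (2*((n:ℝ)+1)^2)
    with hg
  -- Step A : for each r in [0,1), the integral of the regularized log equals the sum
  have stepA : ∀ r : ℝ, 0 ≤ r → r < 1 →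
      HasSum (fun n => g n r)
        (∫ φ in α..β, (1/2) * Real.log (1 + 2*r*Real.cos (2*φ) + r^2)) := by
    intro r hr0 hr1
    have hr : |r| < 1 := by rw [abs_of_nonneg hr0]; exact hr1
    have h := intervalIntegral.hasSum_integral_of_dominated_convergence
      (F := fun (n : ℕ) (φ : ℝ) => (-1)^n * r^(n+1) * Real.cos (((n:ℝ)+1)*(2*φ)) / ((n:ℝ)+1))
      (bound := fun n _ => r^(n+1) / ((n:ℝ)+1))
      (f := fun φ => (1/2) * Real.log (1 + 2*r*Real.cos (2*φ) + r^2))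
      (μ := MeasureTheory.volume) (a := α) (b := β)
      (fun n => (Continuous.aestronglyMeasurable (by fun_prop)))
      (fun n => MeasureTheory.ae_of_all _ (fun t _ => ?_))
      (MeasureTheory.ae_of_all _ (fun t _ => ?_))
      ?_
      (MeasureTheory.ae_of_all _ (fun t _ => hasSumLog r (2*t) hr))
    · refine h.congr_fun fun n => ?_
      have hk : (2*((n:ℝ)+1)) ≠ 0 := by positivity
      have hint : (∫ φ in α..β, (-1:ℝ)^n * r^(n+1) * Real.cos (((n:ℝ)+1)*(2*φ)) / ((n:ℝ)+1))
           = ((-1:ℝ)^n * r^(n+1) / ((n:ℝ)+1)) * ∫ φ in α..β, Real.cos ((2*((n:ℝ)+1))*φ) := by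
        rw [← intervalIntegral.integral_const_mul]
        apply intervalIntegral.integral_congr
        intro φ _
        simp only
        rw [show (2*((n:ℝ)+1))*φ = ((n:ℝ)+1)*(2*φ) by ring]
        ring
      rw [hint, integral_cos_mul' _ _ _ hk, hg]
      simp only
      rw [div_mul_div_comm, show ((n:ℝ)+1)*(2*((n:ℝ)+1)) = 2*((n:ℝ)+1)^2 by ring]
    · -- norm bound
      have h1 : |Real.cos (((n:ℝ)+1)*(2*t))| ≤ 1 := Real.abs_cos_le_one _
      have h2 : (0:ℝ) < (n:ℝ)+1 := by positivity
      rw [Real.norm_eq_abs, abs_div, abs_mul, abs_mul, abs_pow, abs_pow, abs_neg, abs_one,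
        one_pow, one_mul, abs_of_nonneg hr0, abs_of_pos h2]
      calc r^(n+1) * |Real.cos (((n:ℝ)+1)*(2*t))| / ((n:ℝ)+1)
          ≤ r^(n+1) * 1 / ((n:ℝ)+1) := by gcongr
        _ = r^(n+1) / ((n:ℝ)+1) := by ring
    · -- summability of bound
      apply Summable.of_nonneg_of_le (fun n => by positivity)
        (fun n => ?_) (((summable_geometric_of_lt_one hr0 hr1)).mul_left r)
      have h2 : (1:ℝ) ≤ (n:ℝ)+1 := by norm_num
      calc r^(n+1) / ((n:ℝ)+1) ≤ r^(n+1) / 1 := by gcongr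
        _ = r * r^n := by rw [pow_succ]; ring
    · -- integrability of tsum of bound
      exact intervalIntegrable_const
  -- Step B : limit of the integrals
  set C : ℝ := (1/2) * max (Real.log 4) (-Real.log c) with hC
  have hIco : Set.Ico (0:ℝ) 1 ∈ nhdsWithin (1:ℝ) (Set.Iio 1) :=
    Ico_mem_nhdsLT_of_mem (by constructor <;> norm_num)
  have hIlim : Filter.Tendsto (fun r => ∫ φ in α..β, (1/2) * Real.log (1 + 2*r*Real.cos (2*φ) + r^2))
      (nhdsWithin (1:ℝ) (Set.Iio 1)) (nhds (∫ φ in α..β, Real.log (2*Real.cos φ))) := by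
    apply intervalIntegral.tendsto_integral_filter_of_dominated_convergence (fun _ => C)
    · exact Filter.Eventually.of_forall fun r =>
        (((Real.measurable_log.comp (by fun_prop)).const_mul (1/2)).aestronglyMeasurable)
    · filter_upwards [hIco] with r hr
      apply MeasureTheory.ae_of_all
      intro t ht
      have hIcc : t ∈ Set.Icc α β := by
        rw [Set.uIoc_of_le hαβ] at ht
        exact ⟨le_of_lt ht.1, ht.2⟩
      have hA1 : c ≤ 1 + 2*r*Real.cos (2*t) + r^2 := hkey r hr.1 hr.2.le t hIcc
      have hA2 : 1 + 2*r*Real.cos (2*t) + r^2 ≤ 4 := by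
        nlinarith [Real.cos_le_one (2*t), hr.1, hr.2.le]
      rw [Real.norm_eq_abs, abs_mul, abs_of_nonneg (by norm_num : (0:ℝ) ≤ 1/2), hC]
      have h0 : (0:ℝ) < 1 + 2*r*Real.cos (2*t) + r^2 := lt_of_lt_of_le hc hA1
      have hle : Real.log (1 + 2*r*Real.cos (2*t) + r^2) ≤ Real.log 4 :=
        Real.log_le_log h0 hA2
      have hge : Real.log c ≤ Real.log (1 + 2*r*Real.cos (2*t) + r^2) :=
        Real.log_le_log hc hA1
      have habs2 : |Real.log (1 + 2*r*Real.cos (2*t) + r^2)| ≤ max (Real.log 4) (-Real.log c) := by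
        rw [abs_le]
        constructor
        · have h5 : -(max (Real.log 4) (-Real.log c)) ≤ Real.log c := by
            simpa using neg_le_neg (le_max_right (Real.log 4) (-Real.log c))
          exact le_trans h5 hge
        · exact le_trans hle (le_max_left _ _)
      linarith [habs2]
    · exact intervalIntegrable_const
    · apply MeasureTheory.ae_of_all
      intro t ht
      have hIcc : t ∈ Set.Icc α β := by
        rw [Set.uIoc_of_le hαβ] at ht
        exact ⟨le_of_lt ht.1, ht.2⟩
      have hcpos : 0 < Real.cos t := hcos t hIcc
      have hval : 2 + 2*Real.cos (2*t) = (2*Real.cos t)^2 := by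
        rw [Real.cos_two_mul]; ring
      have h1 : Filter.Tendsto (fun r : ℝ => 1 + 2*r*Real.cos (2*t) + r^2) (nhds 1)
          (nhds (2 + 2*Real.cos (2*t))) := by
        have := (Continuous.tendsto (by fun_prop :
          Continuous (fun r : ℝ => 1 + 2*r*Real.cos (2*t) + r^2)) 1)
        convert this using 2
        ring
      have hpos : (0:ℝ) < 2 + 2*Real.cos (2*t) := by
        rw [hval]; positivity
      have h2 : Filter.Tendsto (fun r : ℝ => (1/2) * Real.log (1 + 2*r*Real.cos (2*t) + r^2))
          (nhds 1) (nhds ((1/2) * Real.log (2 + 2*Real.cos (2*t)))) :=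
        (((Real.continuousAt_log hpos.ne').tendsto.comp h1).const_mul (1/2))
      have h3 : (1/2) * Real.log (2 + 2*Real.cos (2*t)) = Real.log (2*Real.cos t) := by
        rw [hval, show ((2:ℝ)*Real.cos t)^2 = (2*Real.cos t)^(2:ℕ) by norm_num,
          Real.log_pow]
        push_cast
        ring
      rw [h3] at h2
      exact h2.mono_left nhdsWithin_le_nhds
  -- Step C : limit of the sums
  have hGlim : Filter.Tendsto (fun r => ∑' n, g n r) (nhdsWithin (1:ℝ) (Set.Iio 1))
      (nhds (∑' n, g n 1)) := by
    apply tendsto_tsum_of_dominated_convergence summable_inv_sq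
    · intro n
      exact ((Continuous.tendsto (by rw [hg]; fun_prop :
        Continuous (fun r => g n r)) 1)).mono_left nhdsWithin_le_nhds
    · filter_upwards [hIco] with r hr
      intro n
      rw [hg]
      have h2 : (0:ℝ) < ((n:ℝ)+1)^2 := by positivity
      have hΔ : |Real.sin (2*((n:ℝ)+1)*β) - Real.sin (2*((n:ℝ)+1)*α)| ≤ 2 := by
        calc |Real.sin (2*((n:ℝ)+1)*β) - Real.sin (2*((n:ℝ)+1)*α)|
            ≤ |Real.sin (2*((n:ℝ)+1)*β)| + |Real.sin (2*((n:ℝ)+1)*α)| := abs_sub _ _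
          _ ≤ 1 + 1 := add_le_add (Real.abs_sin_le_one _) (Real.abs_sin_le_one _)
          _ = 2 := by norm_num
      have hrp : |r|^(n+1) ≤ 1 := by
        apply pow_le_one₀ (abs_nonneg r)
        rw [abs_of_nonneg hr.1]; exact hr.2.le
      rw [Real.norm_eq_abs, abs_div, abs_mul, abs_mul, abs_pow, abs_pow, abs_neg, abs_one,
        one_pow, one_mul, abs_of_pos (by positivity : (0:ℝ) < 2*((n:ℝ)+1)^2)]
      calc |r|^(n+1) * |Real.sin (2*((n:ℝ)+1)*β) - Real.sin (2*((n:ℝ)+1)*α)| / (2*((n:ℝ)+1)^2)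
          ≤ 1 * 2 / (2*((n:ℝ)+1)^2) := by gcongr
        _ = 1/((n:ℝ)+1)^2 := by field_simp
  -- combine the limits
  have heq : ∀ᶠ r in nhdsWithin (1:ℝ) (Set.Iio 1),
      (∫ φ in α..β, (1/2) * Real.log (1 + 2*r*Real.cos (2*φ) + r^2)) = ∑' n, g n r := by
    filter_upwards [hIco] with r hr
    exact ((stepA r hr.1 hr.2).tsum_eq).symm
  have hIlim2 : Filter.Tendsto (fun r => ∑' n, g n r) (nhdsWithin (1:ℝ) (Set.Iio 1))
      (nhds (∫ φ in α..β, Real.log (2*Real.cos φ))) := by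
    apply hIlim.congr' heq
  have hmain : (∫ φ in α..β, Real.log (2*Real.cos φ)) = ∑' n, g n 1 :=
    tendsto_nhds_unique hIlim2 hGlim
  rw [hmain]
  -- identify the sum with the Clausen functions
  have hsin : ∀ (x : ℝ) (n : ℕ), Real.sin (((n:ℝ)+1)*(π - 2*x)) = (-1)^n * Real.sin (2*((n:ℝ)+1)*x) := by
    intro x n
    have : ((n:ℝ)+1)*(π - 2*x) = ((n+1 : ℕ):ℝ)*π - 2*((n:ℝ)+1)*x := by push_cast; ring
    rw [this, Real.sin_nat_mul_pi_sub, pow_succ]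
    ring
  have hsummb : Summable (fun n : ℕ => (-1:ℝ)^n * Real.sin (2*((n:ℝ)+1)*β)/((n:ℝ)+1)^2) := by
    apply Summable.of_norm_bounded summable_inv_sq
    intro n
    rw [Real.norm_eq_abs, abs_div, abs_mul, abs_pow, abs_neg, abs_one, one_pow, one_mul,
      abs_of_pos (by positivity : (0:ℝ) < ((n:ℝ)+1)^2)]
    gcongr
    exact Real.abs_sin_le_one _
  have hsumma : Summable (fun n : ℕ => (-1:ℝ)^n * Real.sin (2*((n:ℝ)+1)*α)/((n:ℝ)+1)^2) := by
    apply Summable.of_norm_bounded summable_inv_sq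
    intro n
    rw [Real.norm_eq_abs, abs_div, abs_mul, abs_pow, abs_neg, abs_one, one_pow, one_mul,
      abs_of_pos (by positivity : (0:ℝ) < ((n:ℝ)+1)^2)]
    gcongr
    exact Real.abs_sin_le_one _
  have hCl2b : Cl2 (π - 2*β) = ∑' n : ℕ, (-1:ℝ)^n * Real.sin (2*((n:ℝ)+1)*β)/((n:ℝ)+1)^2 := by
    unfold Cl2
    exact tsum_congr fun n => by rw [hsin β n]
  have hCl2a : Cl2 (π - 2*α) = ∑' n : ℕ, (-1:ℝ)^n * Real.sin (2*((n:ℝ)+1)*α)/((n:ℝ)+1)^2 := by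
    unfold Cl2
    exact tsum_congr fun n => by rw [hsin α n]
  rw [hCl2a, hCl2b, ← Summable.tsum_sub hsummb hsumma, ← tsum_mul_left]
  apply tsum_congr
  intro n
  rw [hg]
  have hne : ((n:ℝ)+1) ≠ 0 := by positivity
  field_simp
  ring
end

section
/- Let b be a real number with 0 < b < 2. Then ∫_{2+b}^∞ (1/(w·√(w² + b² − 4)))·artanh( b/√(w² + b² − 4) ) dw + ∫_2^{2+b} (1/(w·√(w² + b² − 4)))·artanh( (w² − 4 − 2b)/(w·√(w² + b² − 4)) ) dw = 0. -/
open Real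
open MeasureTheory Set

/-- The real inverse hyperbolic tangent, `_root_.artanh(x) = (1/2)·log((1+x)/(1−x))`. -/
noncomputable def artanh (x : ℝ) : ℝ := (1 / 2) * Real.log ((1 + x) / (1 - x))

noncomputable def kern (b t w : ℝ) : ℝ := 1 / (w * (w ^ 2 + b ^ 2 - 4 - t ^ 2))

noncomputable def Phi (b t w : ℝ) : ℝ :=
  (1 / (2 * (4 - b ^ 2 + t ^ 2))) * (Real.log (w ^ 2 - (4 - b ^ 2 + t ^ 2)) - Real.log (w ^ 2))

noncomputable def WW (b t : ℝ) : ℝ := (t + Real.sqrt (t ^ 2 + 16 + 8 * b)) / 2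

noncomputable def VV (b t : ℝ) : ℝ := (-t + Real.sqrt (t ^ 2 + 16 + 8 * b)) / 2

lemma artanh_zero : _root_.artanh 0 = 0 := by simp [_root_.artanh]

lemma hasDerivAt_artanh_aux (w s t : ℝ) (hw : 0 < w) (hs : 0 < s) (ht : t ^ 2 < s ^ 2) :
    HasDerivAt (fun u => 1 / (w * s) * _root_.artanh (u / s)) (1 / (w * (s ^ 2 - t ^ 2))) t := by
  have hts : -s < t ∧ t < s := by
    constructor <;> nlinarith
  have h1p : 0 < 1 + t / s := by
    have : -1 < t / s := by rw [neg_lt, ← neg_div]; exact (div_lt_one hs).mpr (by linarith [hts.1])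
    linarith
  have h1m : 0 < 1 - t / s := by
    have : t / s < 1 := (div_lt_one hs).mpr hts.2
    linarith
  have h1 : HasDerivAt (fun u : ℝ => 1 + u / s) (1 / s) t := by
    simpa [one_div] using ((hasDerivAt_id t).div_const s).const_add 1
  have h2 : HasDerivAt (fun u : ℝ => 1 - u / s) (-(1 / s)) t := by
    simpa [one_div] using ((hasDerivAt_id t).div_const s).const_sub 1
  have hq : HasDerivAt (fun u : ℝ => (1 + u / s) / (1 - u / s))
      ((1 / s * (1 - t / s) - (1 + t / s) * -(1 / s)) / (1 - t / s) ^ 2) t :=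
    h1.div h2 (ne_of_gt h1m)
  have hql : HasDerivAt (fun u : ℝ => Real.log ((1 + u / s) / (1 - u / s)))
      (((1 / s * (1 - t / s) - (1 + t / s) * -(1 / s)) / (1 - t / s) ^ 2) / ((1 + t / s) / (1 - t / s))) t :=
    hq.log (by positivity)
  have := (hql.const_mul ((1:ℝ) / 2)).const_mul (1 / (w * s))
  have heq : HasDerivAt (fun u => 1 / (w * s) * _root_.artanh (u / s))
      (1 / (w * s) * ((1:ℝ) / 2 * (((1 / s * (1 - t / s) - (1 + t / s) * -(1 / s)) / (1 - t / s) ^ 2) / ((1 + t / s) / (1 - t / s))))) t := by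
    simpa [_root_.artanh, mul_assoc] using this
  convert heq using 1
  have hs' : s ≠ 0 := ne_of_gt hs
  have h2' : s - t ≠ 0 := by nlinarith [hts.2]
  have h3' : s + t ≠ 0 := by nlinarith [hts.1]
  have h4' : w * s ^ 2 - w * t ^ 2 ≠ 0 := by nlinarith
  have hX : (w * s ^ 2 - w * t ^ 2) * (w * s ^ 2 - w * t ^ 2)⁻¹ = 1 := mul_inv_cancel₀ h4'
  field_simp
  rw [div_eq_iff (by nlinarith)]; ring

lemma integral_kern_t (b w β : ℝ) (hw : 0 < w) (hS : 0 < w ^ 2 + b ^ 2 - 4)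
    (hβ : β ^ 2 < w ^ 2 + b ^ 2 - 4) :
    ∫ t in (0:ℝ)..β, kern b t w
      = 1 / (w * Real.sqrt (w ^ 2 + b ^ 2 - 4)) * _root_.artanh (β / Real.sqrt (w ^ 2 + b ^ 2 - 4)) := by
  set s := Real.sqrt (w ^ 2 + b ^ 2 - 4) with hs_def
  have hs : 0 < s := Real.sqrt_pos.mpr hS
  have hs2 : s ^ 2 = w ^ 2 + b ^ 2 - 4 := Real.sq_sqrt hS.le
  have hb2 : ∀ t ∈ Set.uIcc (0:ℝ) β, t ^ 2 ≤ β ^ 2 := by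
    intro t ht
    rcases Set.mem_uIcc.mp ht with h | h
    · nlinarith [h.1, h.2]
    · nlinarith [h.1, h.2]
  have key : ∀ t ∈ Set.uIcc (0:ℝ) β,
      HasDerivAt (fun u => 1 / (w * s) * _root_.artanh (u / s)) (kern b t w) t := by
    intro t ht
    have := hasDerivAt_artanh_aux w s t hw hs (by nlinarith [hb2 t ht])
    convert this using 1
    unfold kern
    rw [hs2]
  have hcont : IntervalIntegrable (fun t => kern b t w) volume 0 β := by
    apply ContinuousOn.intervalIntegrable
    simp only [kern]
    apply ContinuousOn.div continuousOn_const (by fun_prop)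
    intro t ht
    have := hb2 t ht
    nlinarith
  have hres := intervalIntegral.integral_eq_sub_of_hasDerivAt key hcont
  rw [hres]
  simp [_root_.artanh_zero]

lemma hasDerivAt_Phi (b t w : ℝ) (hw : 0 < w) (hC : 0 < 4 - b ^ 2 + t ^ 2)
    (hwC : 4 - b ^ 2 + t ^ 2 < w ^ 2) : HasDerivAt (Phi b t) (kern b t w) w := by
  have h1 : HasDerivAt (fun w : ℝ => w ^ 2 - (4 - b ^ 2 + t ^ 2)) (2 * w) w := by
    simpa using (hasDerivAt_pow 2 w).sub_const (4 - b ^ 2 + t ^ 2)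
  have h2 : HasDerivAt (fun w : ℝ => w ^ 2) (2 * w) w := by simpa using hasDerivAt_pow 2 w
  have hl1 : HasDerivAt (fun w : ℝ => Real.log (w ^ 2 - (4 - b ^ 2 + t ^ 2)))
      (2 * w / (w ^ 2 - (4 - b ^ 2 + t ^ 2))) w := h1.log (by nlinarith)
  have hl2 : HasDerivAt (fun w : ℝ => Real.log (w ^ 2)) (2 * w / w ^ 2) w :=
    h2.log (by positivity)
  have hd := (hl1.sub hl2).const_mul (1 / (2 * (4 - b ^ 2 + t ^ 2)))
  have hPhi : Phi b t = fun w : ℝ => (1 / (2 * (4 - b ^ 2 + t ^ 2))) *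
      (Real.log (w ^ 2 - (4 - b ^ 2 + t ^ 2)) - Real.log (w ^ 2)) := rfl
  rw [hPhi]
  refine hd.congr_deriv (Eq.symm ?_)
  simp only [kern]
  have hne1 : w ^ 2 - (4 - b ^ 2 + t ^ 2) ≠ 0 := by nlinarith
  have hne2 : w ≠ 0 := ne_of_gt hw
  have hne3 : (4 - b ^ 2 + t ^ 2) ≠ 0 := ne_of_gt hC
  have hD : (b ^ 2 * w + (-(t ^ 2 * w) - w * 4) + w ^ 3) ≠ 0 := by nlinarith
  have hX : (b ^ 2 * w + (-(t ^ 2 * w) - w * 4) + w ^ 3) * (b ^ 2 * w + (-(t ^ 2 * w) - w * 4) + w ^ 3)⁻¹ = 1 := mul_inv_cancel₀ hD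
  field_simp
  have hne4 : w ^ 2 + b ^ 2 - 4 - t ^ 2 ≠ 0 := by nlinarith
  field_simp
  ring

lemma tendsto_Phi (b t : ℝ) (hC : 0 < 4 - b ^ 2 + t ^ 2) :
    Filter.Tendsto (Phi b t) Filter.atTop (nhds 0) := by
  have h0 : Filter.Tendsto (fun w : ℝ => (4 - b ^ 2 + t ^ 2) / w ^ 2) Filter.atTop (nhds 0) :=
    Filter.Tendsto.div_atTop tendsto_const_nhds (Filter.tendsto_pow_atTop two_ne_zero)
  have h1 : Filter.Tendsto (fun w : ℝ => 1 - (4 - b ^ 2 + t ^ 2) / w ^ 2) Filter.atTop (nhds 1) := by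
    simpa using tendsto_const_nhds.sub h0
  have h2 : Filter.Tendsto (fun w : ℝ => Real.log (1 - (4 - b ^ 2 + t ^ 2) / w ^ 2))
      Filter.atTop (nhds 0) := by
    have := ((Real.continuousAt_log one_ne_zero).tendsto).comp h1
    simpa [Function.comp_def] using this
  have h3 : Filter.Tendsto (fun w : ℝ => (1 / (2 * (4 - b ^ 2 + t ^ 2))) *
      Real.log (1 - (4 - b ^ 2 + t ^ 2) / w ^ 2)) Filter.atTop
      (nhds ((1 / (2 * (4 - b ^ 2 + t ^ 2))) * 0)) := h2.const_mul _
  rw [mul_zero] at h3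
  apply h3.congr'
  filter_upwards [Filter.eventually_gt_atTop (Real.sqrt (4 - b ^ 2 + t ^ 2))] with w hw
  have hw0 : 0 < w := lt_of_le_of_lt (Real.sqrt_nonneg _) hw
  have hw2 : 4 - b ^ 2 + t ^ 2 < w ^ 2 := by
    have := Real.sq_sqrt hC.le
    nlinarith [Real.sqrt_nonneg (4 - b ^ 2 + t ^ 2)]
  have hne1 : w ^ 2 - (4 - b ^ 2 + t ^ 2) ≠ 0 := by nlinarith
  have hne2 : (w : ℝ) ^ 2 ≠ 0 := by positivity
  have harg : 1 - (4 - b ^ 2 + t ^ 2) / w ^ 2 = (w ^ 2 - (4 - b ^ 2 + t ^ 2)) / w ^ 2 := by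
    field_simp
  rw [harg, Real.log_div hne1 hne2]
  rfl

lemma integral_kern_Ioi (b t x : ℝ) (hx : 0 < x) (hC : 0 < 4 - b ^ 2 + t ^ 2)
    (hCx : 4 - b ^ 2 + t ^ 2 < x ^ 2) :
    IntegrableOn (fun w => kern b t w) (Ioi x) ∧
      ∫ w in Ioi x, kern b t w = - Phi b t x := by
  have hderiv : ∀ w ∈ Ici x, HasDerivAt (Phi b t) (kern b t w) w := by
    intro w hw
    rw [mem_Ici] at hw
    exact hasDerivAt_Phi b t w (lt_of_lt_of_le hx hw) hC (by nlinarith)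
  have hpos : ∀ w ∈ Ioi x, 0 ≤ kern b t w := by
    intro w hw
    rw [mem_Ioi] at hw
    have hw2 : x ^ 2 < w ^ 2 := by nlinarith
    have h : 0 < w * (w ^ 2 + b ^ 2 - 4 - t ^ 2) := by nlinarith
    exact le_of_lt (by unfold kern; positivity)
  have htend := tendsto_Phi b t hC
  refine ⟨integrableOn_Ioi_deriv_of_nonneg' hderiv hpos htend, ?_⟩
  simpa using integral_Ioi_of_hasDerivAt_of_nonneg' hderiv hpos htend

lemma integral_kern_w (b t x y : ℝ) (hx : 0 < x) (hC : 0 < 4 - b ^ 2 + t ^ 2)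
    (hCx : 4 - b ^ 2 + t ^ 2 < x ^ 2) (hxy : x ≤ y) :
    ∫ w in x..y, kern b t w = Phi b t y - Phi b t x := by
  apply intervalIntegral.integral_eq_sub_of_hasDerivAt
  · intro w hw
    rw [Set.uIcc_of_le hxy] at hw
    exact hasDerivAt_Phi b t w (lt_of_lt_of_le hx hw.1) hC (by nlinarith [hw.1])
  · apply ContinuousOn.intervalIntegrable
    unfold kern
    apply ContinuousOn.div continuousOn_const (by fun_prop)
    intro w hw
    rw [Set.uIcc_of_le hxy] at hw
    have h1 : x ^ 2 ≤ w ^ 2 := by nlinarith [hw.1]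
    have h2 : 0 < w * (w ^ 2 + b ^ 2 - 4 - t ^ 2) := by nlinarith [hw.1]
    exact ne_of_gt h2

lemma WV_facts (b t : ℝ) (hb0 : 0 < b) (hb2 : b < 2) (ht0 : 0 < t) (htb : t < b) :
    (WW b t) ^ 2 = t * WW b t + (4 + 2 * b) ∧
    (VV b t) ^ 2 = -(t * VV b t) + (4 + 2 * b) ∧
    WW b t * VV b t = 4 + 2 * b ∧
    WW b t - VV b t = t ∧
    Real.sqrt (4 + 2 * b) < WW b t ∧ WW b t < 2 + b ∧
    2 < VV b t ∧ VV b t < Real.sqrt (4 + 2 * b) := by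
  have hr2 : (Real.sqrt (t ^ 2 + 16 + 8 * b)) ^ 2 = t ^ 2 + 16 + 8 * b :=
    Real.sq_sqrt (by positivity)
  set r := Real.sqrt (t ^ 2 + 16 + 8 * b) with hrdef
  have hr0 : 0 ≤ r := Real.sqrt_nonneg _
  have hr4 : 4 < r := by nlinarith
  have hWd : WW b t = (t + r) / 2 := rfl
  have hVd : VV b t = (-t + r) / 2 := rfl
  have hW2 : (WW b t) ^ 2 = t * WW b t + (4 + 2 * b) := by
    rw [hWd]; linear_combination (1/4 : ℝ) * hr2
  have hV2 : (VV b t) ^ 2 = -(t * VV b t) + (4 + 2 * b) := by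
    rw [hVd]; linear_combination (1/4 : ℝ) * hr2
  have hWV : WW b t * VV b t = 4 + 2 * b := by
    rw [hWd, hVd]; linear_combination (1/4 : ℝ) * hr2
  have hsub : WW b t - VV b t = t := by rw [hWd, hVd]; ring
  have hWpos : 0 < WW b t := by rw [hWd]; linarith
  have hVpos : 0 < VV b t := by rw [hVd]; nlinarith
  refine ⟨hW2, hV2, hWV, hsub, ?_, ?_, ?_, ?_⟩
  · rw [Real.sqrt_lt' hWpos]; nlinarith
  · rw [hWd, div_lt_iff₀ (by norm_num : (0:ℝ) < 2)]
    have h1 : r < 4 + 2 * b - t := by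
      rw [hrdef, Real.sqrt_lt' (by linarith)]
      nlinarith
    linarith
  · rw [hVd, lt_div_iff₀ (by norm_num : (0:ℝ) < 2)]
    have h1 : t + 4 < r := by
      rw [hrdef, Real.lt_sqrt (by linarith)]
      nlinarith
    linarith
  · rw [Real.lt_sqrt hVpos.le]; nlinarith

lemma Phi_split (b t : ℝ) (hb0 : 0 < b) (hb2 : b < 2) (ht0 : 0 < t) (htb : t < b) :
    Phi b t 2 = Phi b t (WW b t) + Phi b t (VV b t) := by
  obtain ⟨hW2, hV2, hWV, hsub, hW1, hW3, hV1, hV3⟩ := WV_facts b t hb0 hb2 ht0 htb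
  set W := WW b t
  set V := VV b t
  set C := 4 - b ^ 2 + t ^ 2 with hC
  have hC0 : 0 < C := by nlinarith
  have h4C : 0 < 4 - C := by nlinarith
  have hWpos : 0 < W := lt_trans (Real.sqrt_pos.mpr (by linarith)) hW1
  have hVpos : 0 < V := by linarith
  have hWC : 0 < W ^ 2 - C := by nlinarith
  have hVC : 0 < V ^ 2 - C := by
    have hvc : V ^ 2 - C = b * (2 + b) - t * W := by
      linear_combination hV2 + t * hsub
    rw [hvc]
    nlinarith
  have key : (4 - C) * (W * V) ^ 2 = 4 * ((W ^ 2 - C) * (V ^ 2 - C)) := by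
    linear_combination ((4 - C) * (W * V + (4 + 2 * b)) + 4 * t ^ 2) * hWV
      + (-(4 * t * (4 + 2 * b - C))) * hsub + (-(4 * (V ^ 2 - C))) * hW2
      + (-(4 * (t * W + (4 + 2 * b - C)))) * hV2
  have hprod : ((2:ℝ) ^ 2 - C) / 2 ^ 2 = ((W ^ 2 - C) / W ^ 2) * ((V ^ 2 - C) / V ^ 2) := by
    rw [div_mul_div_comm, div_eq_div_iff (by norm_num) (by positivity)]
    linear_combination key
  have hlog : Real.log ((2:ℝ) ^ 2 - C) - Real.log ((2:ℝ) ^ 2)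
      = (Real.log (W ^ 2 - C) - Real.log (W ^ 2)) + (Real.log (V ^ 2 - C) - Real.log (V ^ 2)) := by
    rw [← Real.log_div (by norm_num; linarith) (by norm_num),
        ← Real.log_div (ne_of_gt hWC) (by positivity),
        ← Real.log_div (ne_of_gt hVC) (by positivity),
        ← Real.log_mul (by positivity) (by positivity), hprod]
  show (1 / (2 * C)) * (Real.log ((2:ℝ) ^ 2 - C) - Real.log ((2:ℝ) ^ 2))
      = (1 / (2 * C)) * (Real.log (W ^ 2 - C) - Real.log (W ^ 2))
        + (1 / (2 * C)) * (Real.log (V ^ 2 - C) - Real.log (V ^ 2))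
  rw [hlog]; ring

lemma artanh_neg (x : ℝ) : _root_.artanh (-x) = - _root_.artanh x := by
  unfold _root_.artanh
  have h : (1 + -x) / (1 - -x) = ((1 + x) / (1 - x))⁻¹ := by
    rw [inv_div]
    ring_nf
  rw [h, Real.log_inv]
  ring

-- q(w) = (w^2-4-2b)/w ; monotonicity/inverse facts
lemma W_lt_iff (b t w : ℝ) (hb0 : 0 < b) (hb2 : b < 2) (ht0 : 0 < t) (htb : t < b)
    (hw : 0 < w) : (WW b t < w ↔ t < (w ^ 2 - 4 - 2 * b) / w) := by
  obtain ⟨hW2, hV2, hWV, hsub, hW1, hW3, hV1, hV3⟩ := WV_facts b t hb0 hb2 ht0 htb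
  have hVpos : 0 < VV b t := by linarith
  have hfac : w ^ 2 - t * w - (4 + 2 * b) = (w - WW b t) * (w + VV b t) := by
    linear_combination hWV + w * hsub
  rw [lt_div_iff₀ hw]
  constructor
  · intro h
    nlinarith [mul_pos (sub_pos.mpr h) (by linarith : 0 < w + VV b t)]
  · intro h
    nlinarith [hVpos]

lemma V_gt_iff (b t w : ℝ) (hb0 : 0 < b) (hb2 : b < 2) (ht0 : 0 < t) (htb : t < b)
    (hw : 0 < w) : (w < VV b t ↔ t < -((w ^ 2 - 4 - 2 * b) / w)) := by
  obtain ⟨hW2, hV2, hWV, hsub, hW1, hW3, hV1, hV3⟩ := WV_facts b t hb0 hb2 ht0 htb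
  have hWpos : 0 < WW b t := lt_trans (Real.sqrt_pos.mpr (by linarith)) hW1
  have hfac : w ^ 2 + t * w - (4 + 2 * b) = (w - VV b t) * (w + WW b t) := by
    linear_combination hWV - w * hsub
  rw [← neg_div, lt_div_iff₀ hw]
  constructor
  · intro h
    nlinarith [mul_pos (sub_pos.mpr h) (by linarith : 0 < w + WW b t)]
  · intro h
    nlinarith [hWpos]

lemma cont_WW (b : ℝ) : Continuous (WW b) := by
  have h : Continuous fun t : ℝ => Real.sqrt (t ^ 2 + 16 + 8 * b) :=
    Real.continuous_sqrt.comp (by fun_prop)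
  have h2 : Continuous fun t : ℝ => (t + Real.sqrt (t ^ 2 + 16 + 8 * b)) / 2 :=
    (continuous_id.add h).div_const 2
  exact h2

lemma cont_VV (b : ℝ) : Continuous (VV b) := by
  have h : Continuous fun t : ℝ => Real.sqrt (t ^ 2 + 16 + 8 * b) :=
    Real.continuous_sqrt.comp (by fun_prop)
  have h2 : Continuous fun t : ℝ => (-t + Real.sqrt (t ^ 2 + 16 + 8 * b)) / 2 :=
    (continuous_id.neg.add h).div_const 2
  exact h2

lemma meas_kern (b : ℝ) : Measurable (Function.uncurry (kern b)) := by
  unfold Function.uncurry kern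
  fun_prop

lemma integrableOn_kern_Ioo (b t x y : ℝ) (hx : 0 < x) (hC : 4 - b ^ 2 + t ^ 2 < x ^ 2)
    (hxy : x ≤ y) : IntegrableOn (kern b t) (Ioo x y) := by
  have h : IntegrableOn (kern b t) (Icc x y) := by
    apply ContinuousOn.integrableOn_Icc
    unfold kern
    apply ContinuousOn.div continuousOn_const (by fun_prop)
    intro w hw
    have h1 : x ^ 2 ≤ w ^ 2 := by nlinarith [hw.1, hw.2]
    have h2 : 0 < w * (w ^ 2 + b ^ 2 - 4 - t ^ 2) := by nlinarith [hw.1]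
    exact ne_of_gt h2
  exact h.mono_set Ioo_subset_Icc_self

lemma innerA_w (b w : ℝ) (hb0 : 0 < b) (hb2 : b < 2) (hw : 2 + b < w) :
    ∫ t in Ioo (0:ℝ) b, kern b t w
      = 1 / (w * Real.sqrt (w ^ 2 + b ^ 2 - 4)) * _root_.artanh (b / Real.sqrt (w ^ 2 + b ^ 2 - 4)) := by
  rw [← MeasureTheory.integral_Ioc_eq_integral_Ioo, ← intervalIntegral.integral_of_le hb0.le]
  exact integral_kern_t b w b (by linarith) (by nlinarith) (by nlinarith)

lemma innerB_w (b w : ℝ) (hb0 : 0 < b) (hb2 : b < 2)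
    (hw1 : Real.sqrt (4 + 2 * b) < w) (hw2 : w < 2 + b) :
    ∫ t in Ioo (0:ℝ) b, Set.indicator (Ioi (WW b t)) (kern b t) w
      = 1 / (w * Real.sqrt (w ^ 2 + b ^ 2 - 4))
        * _root_.artanh ((w ^ 2 - 4 - 2 * b) / (w * Real.sqrt (w ^ 2 + b ^ 2 - 4))) := by
  have hws2 : Real.sqrt (4 + 2 * b) ^ 2 = 4 + 2 * b := Real.sq_sqrt (by positivity)
  have hwsnn : 0 ≤ Real.sqrt (4 + 2 * b) := Real.sqrt_nonneg _
  have hw0 : 0 < w := lt_of_le_of_lt hwsnn hw1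
  have hw2' : 2 < w := by nlinarith
  set q := (w ^ 2 - 4 - 2 * b) / w with hq
  have hq0 : 0 < q := by
    rw [hq]; apply div_pos ?_ hw0; nlinarith
  have hqb : q < b := by rw [hq, div_lt_iff₀ hw0]; nlinarith
  have hpt : ∀ t ∈ Ioo (0:ℝ) b, Set.indicator (Ioi (WW b t)) (kern b t) w
      = Set.indicator (Ioo (0:ℝ) q) (fun t => kern b t w) t := by
    intro t ht
    rw [Set.indicator_apply, Set.indicator_apply]
    have hiff : WW b t < w ↔ t < q := W_lt_iff b t w hb0 hb2 ht.1 ht.2 hw0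
    by_cases h : t < q
    · rw [if_pos (mem_Ioi.mpr (hiff.mpr h)), if_pos (mem_Ioo.mpr ⟨ht.1, h⟩)]
    · rw [if_neg (fun hh => h (hiff.mp (mem_Ioi.mp hh))),
        if_neg (fun hh => h (mem_Ioo.mp hh).2)]
  rw [MeasureTheory.setIntegral_congr_fun measurableSet_Ioo hpt,
    MeasureTheory.setIntegral_indicator measurableSet_Ioo]
  have hscap : Ioo (0:ℝ) b ∩ Ioo (0:ℝ) q = Ioo (0:ℝ) q := by
    rw [Set.Ioo_inter_Ioo]
    simp [min_eq_right hqb.le]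
  rw [hscap, ← MeasureTheory.integral_Ioc_eq_integral_Ioo,
    ← intervalIntegral.integral_of_le hq0.le]
  have hkey : (w ^ 2 + b ^ 2 - 4) * w ^ 2 - (w ^ 2 - 4 - 2 * b) ^ 2
      = (w ^ 2 - 4) * (2 + b) ^ 2 := by ring
  have hq2 : q ^ 2 < w ^ 2 + b ^ 2 - 4 := by
    rw [hq, div_pow, div_lt_iff₀ (by positivity)]
    nlinarith [mul_pos (by nlinarith : (0:ℝ) < w ^ 2 - 4) (by positivity : (0:ℝ) < (2 + b) ^ 2)]
  rw [integral_kern_t b w q hw0 (by nlinarith) hq2, hq, div_div]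

lemma innerC_w (b w : ℝ) (hb0 : 0 < b) (hb2 : b < 2)
    (hw1 : 2 < w) (hw2 : w < Real.sqrt (4 + 2 * b)) :
    ∫ t in Ioo (0:ℝ) b, Set.indicator (Iio (VV b t)) (kern b t) w
      = -(1 / (w * Real.sqrt (w ^ 2 + b ^ 2 - 4))
        * _root_.artanh ((w ^ 2 - 4 - 2 * b) / (w * Real.sqrt (w ^ 2 + b ^ 2 - 4)))) := by
  have hws2 : Real.sqrt (4 + 2 * b) ^ 2 = 4 + 2 * b := Real.sq_sqrt (by positivity)
  have hw0 : 0 < w := by linarith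
  have hwlt : w ^ 2 < 4 + 2 * b := by nlinarith [Real.sqrt_nonneg (4 + 2 * b)]
  set q := -((w ^ 2 - 4 - 2 * b) / w) with hq
  have hq0 : 0 < q := by
    rw [hq, neg_pos]
    exact div_neg_of_neg_of_pos (by linarith) hw0
  have hqb : q < b := by
    rw [hq, neg_div', div_lt_iff₀ hw0]
    nlinarith
  have hpt : ∀ t ∈ Ioo (0:ℝ) b, Set.indicator (Iio (VV b t)) (kern b t) w
      = Set.indicator (Ioo (0:ℝ) q) (fun t => kern b t w) t := by
    intro t ht
    rw [Set.indicator_apply, Set.indicator_apply]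
    have hiff : w < VV b t ↔ t < q := V_gt_iff b t w hb0 hb2 ht.1 ht.2 hw0
    by_cases h : t < q
    · rw [if_pos (mem_Iio.mpr (hiff.mpr h)), if_pos (mem_Ioo.mpr ⟨ht.1, h⟩)]
    · rw [if_neg (fun hh => h (hiff.mp (mem_Iio.mp hh))),
        if_neg (fun hh => h (mem_Ioo.mp hh).2)]
  rw [MeasureTheory.setIntegral_congr_fun measurableSet_Ioo hpt,
    MeasureTheory.setIntegral_indicator measurableSet_Ioo]
  have hscap : Ioo (0:ℝ) b ∩ Ioo (0:ℝ) q = Ioo (0:ℝ) q := by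
    rw [Set.Ioo_inter_Ioo]
    simp [min_eq_right hqb.le]
  rw [hscap, ← MeasureTheory.integral_Ioc_eq_integral_Ioo,
    ← intervalIntegral.integral_of_le hq0.le]
  have hq2 : q ^ 2 < w ^ 2 + b ^ 2 - 4 := by
    have hqq : q ^ 2 = ((w ^ 2 - 4 - 2 * b) / w) ^ 2 := by rw [hq]; ring
    rw [hqq, div_pow, div_lt_iff₀ (by positivity)]
    nlinarith [mul_pos (by nlinarith : (0:ℝ) < w ^ 2 - 4) (by positivity : (0:ℝ) < (2 + b) ^ 2)]
  rw [integral_kern_t b w q hw0 (by nlinarith) hq2, hq, neg_div, div_div, _root_.artanh_neg]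
  ring

lemma innerA_t (b t : ℝ) (hb0 : 0 < b) (hb2 : b < 2) (ht0 : 0 < t) (htb : t < b) :
    IntegrableOn (fun w => kern b t w) (Ioi (2 + b)) ∧
      ∫ w in Ioi (2 + b), kern b t w = - Phi b t (2 + b) :=
  integral_kern_Ioi b t (2 + b) (by linarith) (by nlinarith) (by nlinarith)

lemma innerB_t (b t : ℝ) (hb0 : 0 < b) (hb2 : b < 2) (ht0 : 0 < t) (htb : t < b) :
    ∫ w in Ioo (Real.sqrt (4 + 2 * b)) (2 + b), Set.indicator (Ioi (WW b t)) (kern b t) w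
      = Phi b t (2 + b) - Phi b t (WW b t) := by
  obtain ⟨hW2, hV2, hWV, hsub, hW1, hW3, hV1, hV3⟩ := WV_facts b t hb0 hb2 ht0 htb
  have hwspos : 0 < Real.sqrt (4 + 2 * b) := Real.sqrt_pos.mpr (by positivity)
  have hWpos : 0 < WW b t := lt_trans hwspos hW1
  rw [MeasureTheory.setIntegral_indicator measurableSet_Ioi]
  have hcap : Ioo (Real.sqrt (4 + 2 * b)) (2 + b) ∩ Ioi (WW b t) = Ioo (WW b t) (2 + b) := by
    ext w
    simp only [mem_inter_iff, mem_Ioo, mem_Ioi]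
    constructor
    · rintro ⟨⟨h1, h2⟩, h3⟩; exact ⟨h3, h2⟩
    · rintro ⟨h1, h2⟩; exact ⟨⟨lt_trans hW1 h1, h2⟩, h1⟩
  rw [hcap, ← MeasureTheory.integral_Ioc_eq_integral_Ioo,
    ← intervalIntegral.integral_of_le hW3.le]
  apply integral_kern_w b t (WW b t) (2 + b) hWpos ?_ ?_ hW3.le
  · nlinarith
  · -- 4 - b^2 + t^2 < (WW b t)^2
    nlinarith [Real.sq_sqrt (by positivity : (0:ℝ) ≤ 4 + 2 * b), Real.sqrt_nonneg (4 + 2 * b)]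

lemma innerC_t (b t : ℝ) (hb0 : 0 < b) (hb2 : b < 2) (ht0 : 0 < t) (htb : t < b) :
    ∫ w in Ioo (2:ℝ) (Real.sqrt (4 + 2 * b)), Set.indicator (Iio (VV b t)) (kern b t) w
      = Phi b t (VV b t) - Phi b t 2 := by
  obtain ⟨hW2, hV2, hWV, hsub, hW1, hW3, hV1, hV3⟩ := WV_facts b t hb0 hb2 ht0 htb
  rw [MeasureTheory.setIntegral_indicator measurableSet_Iio]
  have hcap : Ioo (2:ℝ) (Real.sqrt (4 + 2 * b)) ∩ Iio (VV b t) = Ioo 2 (VV b t) := by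
    ext w
    simp only [mem_inter_iff, mem_Ioo, mem_Iio]
    constructor
    · rintro ⟨⟨h1, h2⟩, h3⟩; exact ⟨h1, h3⟩
    · rintro ⟨h1, h2⟩; exact ⟨⟨h1, lt_trans h2 hV3⟩, h2⟩
  rw [hcap, ← MeasureTheory.integral_Ioc_eq_integral_Ioo,
    ← intervalIntegral.integral_of_le hV1.le]
  apply integral_kern_w b t 2 (VV b t) (by norm_num) (by nlinarith) (by nlinarith) hV1.le

lemma integrableOn_Phi2b (b : ℝ) (hb0 : 0 < b) (hb2 : b < 2) :
    IntegrableOn (fun t => Phi b t (2 + b)) (Ioo 0 b) := by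
  have h : IntegrableOn (fun t => Phi b t (2 + b)) (Icc 0 b) := by
    apply ContinuousOn.integrableOn_Icc
    unfold Phi
    apply ContinuousOn.mul
    · apply ContinuousOn.div continuousOn_const (by fun_prop)
      intro t ht
      simp only [mem_Icc] at ht
      nlinarith [ht.1, ht.2]
    · apply ContinuousOn.sub
      · apply ContinuousOn.log (by fun_prop)
        intro t ht
        simp only [mem_Icc] at ht
        nlinarith [ht.1, ht.2]
      · apply ContinuousOn.log (by fun_prop)
        intro t ht
        nlinarith
  exact h.mono_set Ioo_subset_Icc_self

lemma integrableOn_PhiW (b : ℝ) (hb0 : 0 < b) (hb2 : b < 2) :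
    IntegrableOn (fun t => Phi b t (WW b t)) (Ioo 0 b) := by
    have h : IntegrableOn (fun t => Phi b t (WW b t)) (Icc 0 b) := by
      apply ContinuousOn.integrableOn_Icc
      unfold Phi
      have hWcont : ContinuousOn (WW b) (Icc 0 b) := (cont_WW b).continuousOn
      have hWfacts : ∀ t ∈ Icc (0:ℝ) b, 2 ≤ WW b t ∧ 4 - b ^ 2 + t ^ 2 < (WW b t) ^ 2 := by
        intro t ht
        simp only [mem_Icc] at ht
        have hr2 : (Real.sqrt (t ^ 2 + 16 + 8 * b)) ^ 2 = t ^ 2 + 16 + 8 * b :=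
          Real.sq_sqrt (by positivity)
        have hr4 : 4 ≤ Real.sqrt (t ^ 2 + 16 + 8 * b) := by
          nlinarith [Real.sqrt_nonneg (t ^ 2 + 16 + 8 * b)]
        have hWd : WW b t = (t + Real.sqrt (t ^ 2 + 16 + 8 * b)) / 2 := rfl
        constructor
        · rw [hWd]; linarith [ht.1]
        · rw [hWd]
          nlinarith [ht.1, ht.2]
      apply ContinuousOn.mul
      · apply ContinuousOn.div continuousOn_const (by fun_prop)
        intro t ht
        simp only [mem_Icc] at ht
        nlinarith [ht.1, ht.2]
      · apply ContinuousOn.sub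
        · apply ContinuousOn.log ((hWcont.pow 2).sub (by fun_prop))
          intro t ht
          have := hWfacts t ht
          simp only [Pi.sub_apply, Pi.pow_apply]
          nlinarith [this.1, this.2]
        · apply ContinuousOn.log (hWcont.pow 2)
          intro t ht
          have := hWfacts t ht
          simp only [Pi.pow_apply]
          nlinarith [this.1]
    exact h.mono_set Ioo_subset_Icc_self

lemma integrableOn_g1 (b : ℝ) (hb0 : 0 < b) (hb2 : b < 2) :
    IntegrableOn (fun t => - Phi b t (2 + b)) (Ioo 0 b) :=
  (integrableOn_Phi2b b hb0 hb2).neg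

lemma integrableOn_g2p (b : ℝ) (hb0 : 0 < b) (hb2 : b < 2) :
    IntegrableOn (fun t => Phi b t (2 + b) - Phi b t (WW b t)) (Ioo 0 b) :=
  (integrableOn_Phi2b b hb0 hb2).sub (integrableOn_PhiW b hb0 hb2)

lemma fubini_int (f : ℝ → ℝ → ℝ) (S T : Set ℝ) (hS : MeasurableSet S)
    (hmeas : AEStronglyMeasurable (Function.uncurry f)
      (((volume : Measure ℝ).restrict S).prod ((volume : Measure ℝ).restrict T)))
    (hsec : ∀ t ∈ S, Integrable (f t) ((volume : Measure ℝ).restrict T))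
    (g : ℝ → ℝ) (hg : Integrable g ((volume : Measure ℝ).restrict S))
    (hnorm : ∀ t ∈ S, (∫ w in T, ‖f t w‖) = g t) :
    Integrable (Function.uncurry f)
      (((volume : Measure ℝ).restrict S).prod ((volume : Measure ℝ).restrict T)) := by
  rw [MeasureTheory.integrable_prod_iff hmeas]
  refine ⟨(ae_restrict_mem hS).mono (fun t ht => hsec t ht), ?_⟩
  apply hg.congr
  filter_upwards [ae_restrict_mem hS] with t ht
  exact (hnorm t ht).symm

lemma kern_nonneg (b t w : ℝ) (hb2 : b < 2) (htb : t ^ 2 < b ^ 2) (hw : 2 < w) :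
    0 ≤ kern b t w := by
  have h : 0 < w * (w ^ 2 + b ^ 2 - 4 - t ^ 2) := by nlinarith
  unfold kern
  positivity

theorem stmt8 (b : ℝ) (hb0 : 0 < b) (hb2 : b < 2) :
    (∫ w in Set.Ioi (2 + b),
        (1 / (w * Real.sqrt (w ^ 2 + b ^ 2 - 4))) * _root_.artanh (b / Real.sqrt (w ^ 2 + b ^ 2 - 4)))
      + (∫ w in (2 : ℝ)..(2 + b),
          (1 / (w * Real.sqrt (w ^ 2 + b ^ 2 - 4)))
            * _root_.artanh ((w ^ 2 - 4 - 2 * b) / (w * Real.sqrt (w ^ 2 + b ^ 2 - 4)))) = 0 := by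
  have hws2 : Real.sqrt (4 + 2 * b) ^ 2 = 4 + 2 * b := Real.sq_sqrt (by positivity)
  have hwsnn : 0 ≤ Real.sqrt (4 + 2 * b) := Real.sqrt_nonneg _
  have hws_gt2 : 2 < Real.sqrt (4 + 2 * b) := by nlinarith
  have hws_lt : Real.sqrt (4 + 2 * b) < 2 + b := by nlinarith
  set ws := Real.sqrt (4 + 2 * b) with hws_def
  set S : Set ℝ := Ioo 0 b with hSdef
  have hS : MeasurableSet S := measurableSet_Ioo
  set fB : ℝ → ℝ → ℝ := fun t w => Set.indicator (Ioi (WW b t)) (kern b t) w with hfB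
  set fC : ℝ → ℝ → ℝ := fun t w => Set.indicator (Iio (VV b t)) (kern b t) w with hfC
  -- measurability of the uncurried kernels
  have hmB : Measurable (Function.uncurry fB) := by
    have he : Function.uncurry fB
        = fun p : ℝ × ℝ => if WW b p.1 < p.2 then Function.uncurry (kern b) p else 0 := by
      funext p
      simp [hfB, Function.uncurry, Set.indicator_apply, mem_Ioi]
    rw [he]
    exact Measurable.ite
      (measurableSet_lt ((cont_WW b).measurable.comp measurable_fst) measurable_snd)
      (meas_kern b) measurable_const
  have hmC : Measurable (Function.uncurry fC) := by
    have he : Function.uncurry fC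
        = fun p : ℝ × ℝ => if p.2 < VV b p.1 then Function.uncurry (kern b) p else 0 := by
      funext p
      simp [hfC, Function.uncurry, Set.indicator_apply, mem_Iio]
    rw [he]
    exact Measurable.ite
      (measurableSet_lt measurable_snd ((cont_VV b).measurable.comp measurable_fst))
      (meas_kern b) measurable_const
  -- Fubini integrability, part A
  have hintA : Integrable (Function.uncurry (kern b))
      (((volume : Measure ℝ).restrict S).prod ((volume : Measure ℝ).restrict (Ioi (2 + b)))) := by
    apply fubini_int (kern b) S (Ioi (2 + b)) hS (meas_kern b).aestronglyMeasurable
      (fun t ht => (innerA_t b t hb0 hb2 ht.1 ht.2).1)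
      (fun t => - Phi b t (2 + b)) (integrableOn_g1 b hb0 hb2)
    intro t ht
    have hnn : ∀ w ∈ Ioi (2 + b), ‖kern b t w‖ = kern b t w := by
      intro w hw
      rw [mem_Ioi] at hw
      exact Real.norm_of_nonneg (kern_nonneg b t w hb2 (by nlinarith [ht.1, ht.2]) (by linarith))
    rw [MeasureTheory.setIntegral_congr_fun measurableSet_Ioi hnn]
    exact (innerA_t b t hb0 hb2 ht.1 ht.2).2
  -- Fubini integrability, part B
  have hintB : Integrable (Function.uncurry fB)
      (((volume : Measure ℝ).restrict S).prod ((volume : Measure ℝ).restrict (Ioo ws (2 + b)))) := by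
    apply fubini_int fB S (Ioo ws (2 + b)) hS hmB.aestronglyMeasurable
      (fun t ht => (integrableOn_kern_Ioo b t ws (2 + b) (by linarith) (by nlinarith [ht.1, ht.2]) hws_lt.le).indicator measurableSet_Ioi)
      (fun t => Phi b t (2 + b) - Phi b t (WW b t)) (integrableOn_g2p b hb0 hb2)
    intro t ht
    have hnn : ∀ w ∈ Ioo ws (2 + b), ‖fB t w‖ = fB t w := by
      intro w hw
      apply Real.norm_of_nonneg
      apply Set.indicator_apply_nonneg
      intro _
      exact kern_nonneg b t w hb2 (by nlinarith [ht.1, ht.2]) (by linarith [hw.1])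
    rw [MeasureTheory.setIntegral_congr_fun measurableSet_Ioo hnn]
    exact innerB_t b t hb0 hb2 ht.1 ht.2
  -- Fubini integrability, part C
  have hintC : Integrable (Function.uncurry fC)
      (((volume : Measure ℝ).restrict S).prod ((volume : Measure ℝ).restrict (Ioo 2 ws))) := by
    apply fubini_int fC S (Ioo 2 ws) hS hmC.aestronglyMeasurable
      (fun t ht => (integrableOn_kern_Ioo b t 2 ws (by norm_num) (by nlinarith [ht.1, ht.2]) hws_gt2.le).indicator measurableSet_Iio)
      (fun t => (- Phi b t (2 + b)) + (Phi b t (2 + b) - Phi b t (WW b t)))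
      ((integrableOn_g1 b hb0 hb2).add (integrableOn_g2p b hb0 hb2))
    intro t ht
    have hnn : ∀ w ∈ Ioo (2:ℝ) ws, ‖fC t w‖ = fC t w := by
      intro w hw
      apply Real.norm_of_nonneg
      apply Set.indicator_apply_nonneg
      intro _
      exact kern_nonneg b t w hb2 (by nlinarith [ht.1, ht.2]) hw.1
    rw [MeasureTheory.setIntegral_congr_fun measurableSet_Ioo hnn, innerC_t b t hb0 hb2 ht.1 ht.2]
    have hsplit := Phi_split b t hb0 hb2 ht.1 ht.2
    linarith
  -- evaluate the first integral
  have hI1 : (∫ w in Set.Ioi (2 + b),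
        (1 / (w * Real.sqrt (w ^ 2 + b ^ 2 - 4))) * _root_.artanh (b / Real.sqrt (w ^ 2 + b ^ 2 - 4)))
      = ∫ t in S, - Phi b t (2 + b) := by
    have h1 : (∫ w in Set.Ioi (2 + b),
        (1 / (w * Real.sqrt (w ^ 2 + b ^ 2 - 4))) * _root_.artanh (b / Real.sqrt (w ^ 2 + b ^ 2 - 4)))
        = ∫ w in Ioi (2 + b), ∫ t in S, kern b t w :=
      MeasureTheory.setIntegral_congr_fun measurableSet_Ioi
        (fun w hw => (innerA_w b w hb0 hb2 (mem_Ioi.mp hw)).symm)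
    rw [h1, ← MeasureTheory.integral_integral_swap hintA]
    exact MeasureTheory.setIntegral_congr_fun hS
      (fun t ht => (innerA_t b t hb0 hb2 ht.1 ht.2).2)
  set h2fun : ℝ → ℝ := fun w => (1 / (w * Real.sqrt (w ^ 2 + b ^ 2 - 4)))
      * _root_.artanh ((w ^ 2 - 4 - 2 * b) / (w * Real.sqrt (w ^ 2 + b ^ 2 - 4))) with hh2
  -- integrability of the second integrand on the two pieces
  have hIB' : Integrable (fun w => ∫ t in S, fB t w)
      ((volume : Measure ℝ).restrict (Ioo ws (2 + b))) := by
    have h := hintB.integral_prod_right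
    simpa only [Function.uncurry_apply_pair] using h
  have hIC' : Integrable (fun w => ∫ t in S, fC t w)
      ((volume : Measure ℝ).restrict (Ioo 2 ws)) := by
    have h := hintC.integral_prod_right
    simpa only [Function.uncurry_apply_pair] using h
  have hIOB : IntegrableOn h2fun (Ioo ws (2 + b)) := by
    apply hIB'.congr
    filter_upwards [ae_restrict_mem measurableSet_Ioo] with w hw
    exact innerB_w b w hb0 hb2 hw.1 hw.2
  have hIOC : IntegrableOn h2fun (Ioo 2 ws) := by
    apply hIC'.neg.congr
    filter_upwards [ae_restrict_mem measurableSet_Ioo] with w hw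
    simp only [Pi.neg_apply, hfC, hSdef, hh2]
    rw [innerC_w b w hb0 hb2 hw.1 hw.2, neg_neg]
  have hiiC : IntervalIntegrable h2fun volume 2 ws := by
    rw [intervalIntegrable_iff_integrableOn_Ioo_of_le hws_gt2.le]
    exact hIOC
  have hiiB : IntervalIntegrable h2fun volume ws (2 + b) := by
    rw [intervalIntegrable_iff_integrableOn_Ioo_of_le hws_lt.le]
    exact hIOB
  have hsplit2 : (∫ w in (2:ℝ)..(2 + b), h2fun w)
      = (∫ w in (2:ℝ)..ws, h2fun w) + ∫ w in ws..(2 + b), h2fun w :=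
    (intervalIntegral.integral_add_adjacent_intervals hiiC hiiB).symm
  have hB : (∫ w in ws..(2 + b), h2fun w)
      = ∫ t in S, (Phi b t (2 + b) - Phi b t (WW b t)) := by
    rw [intervalIntegral.integral_of_le hws_lt.le, MeasureTheory.integral_Ioc_eq_integral_Ioo]
    have h1 : ∫ w in Ioo ws (2 + b), h2fun w = ∫ w in Ioo ws (2 + b), ∫ t in S, fB t w :=
      MeasureTheory.setIntegral_congr_fun measurableSet_Ioo
        (fun w hw => (innerB_w b w hb0 hb2 hw.1 hw.2).symm)
    rw [h1, ← MeasureTheory.integral_integral_swap hintB]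
    exact MeasureTheory.setIntegral_congr_fun hS
      (fun t ht => innerB_t b t hb0 hb2 ht.1 ht.2)
  have hC : (∫ w in (2:ℝ)..ws, h2fun w)
      = - ∫ t in S, (Phi b t (VV b t) - Phi b t 2) := by
    rw [intervalIntegral.integral_of_le hws_gt2.le, MeasureTheory.integral_Ioc_eq_integral_Ioo]
    have h1 : ∫ w in Ioo (2:ℝ) ws, h2fun w = ∫ w in Ioo (2:ℝ) ws, -(∫ t in S, fC t w) :=
      MeasureTheory.setIntegral_congr_fun measurableSet_Ioo
        (fun w hw => by
          simp only [hfC, hSdef, hh2]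
          rw [innerC_w b w hb0 hb2 hw.1 hw.2, neg_neg])
    rw [h1, MeasureTheory.integral_neg, ← MeasureTheory.integral_integral_swap hintC, neg_inj]
    exact MeasureTheory.setIntegral_congr_fun hS
      (fun t ht => innerC_t b t hb0 hb2 ht.1 ht.2)
  rw [hI1, hsplit2, hB, hC]
  have hcong : (∫ t in S, (Phi b t (VV b t) - Phi b t 2))
      = ∫ t in S, ((- Phi b t (2 + b)) + (Phi b t (2 + b) - Phi b t (WW b t))) := by
    apply MeasureTheory.setIntegral_congr_fun hS
    intro t ht
    have h := Phi_split b t hb0 hb2 ht.1 ht.2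
    show Phi b t (VV b t) - Phi b t 2
        = -Phi b t (2 + b) + (Phi b t (2 + b) - Phi b t (WW b t))
    linarith
  rw [hcong, MeasureTheory.integral_add (integrableOn_g1 b hb0 hb2) (integrableOn_g2p b hb0 hb2)]
  ring
end

section
/- Let a, b be real numbers with 0 < a, 0 < b, and a² + b² < 4. Set c = √(4 − b²), d = √(4 − a² − b²), p = a + b + 2, φ = arctan(d/p), φₐ = arctan(d/a), and φ_b = arctan(d/b). Then 2·arctan((c·d − a·b)/(2d + b·c)) = −2φ + φₐ + 2φ_b − π/2. -/
open Real

set_option maxHeartbeats 1000000 in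
theorem stmt13 (a b c d p φ φa φb : ℝ) (ha : 0 < a) (hb : 0 < b) (hab : a ^ 2 + b ^ 2 < 4)
    (hc : c = Real.sqrt (4 - b ^ 2)) (hd : d = Real.sqrt (4 - a ^ 2 - b ^ 2))
    (hp : p = a + b + 2) (hφ : φ = Real.arctan (d / p)) (hφa : φa = Real.arctan (d / a))
    (hφb : φb = Real.arctan (d / b)) :
    2 * Real.arctan ((c * d - a * b) / (2 * d + b * c)) =
      -2 * φ + φa + 2 * φb - π / 2 := by
  have hb2 : b ^ 2 < 4 := by nlinarith
  have hc2 : c ^ 2 = 4 - b ^ 2 := by rw [hc]; exact Real.sq_sqrt (by linarith)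
  have hd2 : d ^ 2 = 4 - a ^ 2 - b ^ 2 := by rw [hd]; exact Real.sq_sqrt (by linarith)
  have hcpos : 0 < c := by rw [hc]; exact Real.sqrt_pos.mpr (by linarith)
  have hdpos : 0 < d := by rw [hd]; exact Real.sqrt_pos.mpr (by linarith)
  have hppos : 0 < p := by rw [hp]; linarith
  have ha4 : a < 2 := by nlinarith
  have hca : c ^ 2 = a ^ 2 + d ^ 2 := by rw [hc2, hd2]; ring
  have hacd : a < c + d := by nlinarith
  set q : ℝ := a / (c + d) with hq
  set u : ℝ := d * (a + 2) / (b * p + d ^ 2) with hu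
  set T : ℝ := (c * d - a * b) / (2 * d + b * c) with hT
  have hcd : 0 < c + d := by linarith
  have hD1 : 0 < 2 * d + b * c := by nlinarith [mul_pos hb hcpos]
  have hD3 : 0 < b * p + d ^ 2 := by nlinarith [mul_pos hb hppos, sq_nonneg d]
  -- step 1 : arctan (d/b) - arctan (d/p) = arctan u
  have step1 : Real.arctan (d / b) - Real.arctan (d / p) = Real.arctan u := by
    have h1 : (d / b) * (-(d / p)) < 1 := by
      have h0 : 0 < (d / b) * (d / p) := by
        apply mul_pos <;> exact div_pos hdpos (by assumption)
      nlinarith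
    have h2 := Real.arctan_add (x := d / b) (y := -(d / p)) h1
    rw [Real.arctan_neg] at h2
    rw [show Real.arctan (d / b) - Real.arctan (d / p)
        = Real.arctan (d / b) + -Real.arctan (d / p) by ring, h2]
    congr 1
    rw [hu, hp]
    have hbne : b ≠ 0 := hb.ne'
    have hpne : (a + b + 2 : ℝ) ≠ 0 := by positivity
    have h3 : b * (a + b + 2) + d ^ 2 ≠ 0 := by
      have : 0 < b * (a + b + 2) + d ^ 2 := by
        nlinarith [mul_pos hb (show (0:ℝ) < a + b + 2 by linarith), sq_nonneg d]
      exact this.ne'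
    field_simp
    rw [sub_neg_eq_add, mul_div_assoc, div_self h3]
    ring
  -- step 2+3 : φa = π/2 - 2 * arctan q
  have hq1 : q < 1 := by rw [hq, div_lt_one hcd]; linarith
  have hq0 : 0 < q := div_pos ha hcd
  have step3 : Real.arctan (a / d) = 2 * Real.arctan q := by
    rw [Real.two_mul_arctan (by linarith) hq1]
    congr 1
    rw [hq]
    have hcdne : (c + d : ℝ) ≠ 0 := hcd.ne'
    have hdne : d ≠ 0 := hdpos.ne'
    have hne2 : (c + d) ^ 2 - a ^ 2 ≠ 0 := by
      have : 0 < (c + d) ^ 2 - a ^ 2 := by nlinarith [mul_pos hcpos hdpos]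
      exact this.ne'
    field_simp
    ring_nf
    linear_combination hca
  have step2 : φa = π / 2 - 2 * Real.arctan q := by
    rw [hφa, show d / a = (a / d)⁻¹ by rw [inv_div],
      Real.arctan_inv_of_pos (div_pos ha hdpos), step3]
  -- step 4 : arctan T + arctan q = arctan u
  have step4 : Real.arctan T + Real.arctan q = Real.arctan u := by
    have hTq : T * q < 1 := by
      rw [hT, hq, div_mul_div_comm, div_lt_one (mul_pos hD1 hcd)]
      nlinarith [mul_pos hcpos hdpos, mul_pos ha (mul_pos ha hb),
        mul_pos hb (mul_pos hcpos hcpos), mul_pos hdpos hdpos,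
        mul_pos hb (mul_pos hcpos hdpos)]
    rw [Real.arctan_add hTq]
    congr 1
    rw [hT, hq, hu, hp]
    have h1 : (2 * d + b * c) ≠ 0 := hD1.ne'
    have h2 : (c + d) ≠ 0 := hcd.ne'
    have h3 : b * (a + b + 2) + d ^ 2 ≠ 0 := by
      have : 0 < b * (a + b + 2) + d ^ 2 := by
        nlinarith [mul_pos hb (show (0:ℝ) < a + b + 2 by linarith), sq_nonneg d]
      exact this.ne'
    have hne : (2 * d + b * c) * (c + d) - (c * d - a * b) * a ≠ 0 := by
      rw [hT, hq, div_mul_div_comm, div_lt_one (mul_pos hD1 hcd)] at hTq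
      have : 0 < (2 * d + b * c) * (c + d) - (c * d - a * b) * a := by linarith
      exact this.ne'
    field_simp
    rw [div_eq_iff (fun h => hne (by linear_combination h))]
    ring_nf
    linear_combination (d ^ 3 + b ^ 2 * d) * hc2 + (c * d ^ 2 - b ^ 2 * d - a * b * d) * hd2
  rw [hφb, hφ]
  linarith [step1, step2, step4]
end

section
/- Let a, b be real numbers with 0 < a, 0 < b, and a² + b² < 4. Set d = √(4 − a² − b²), p = a + b + 2, φ = arctan(d/p), φₐ = arctan(d/a), and φ_b = arctan(d/b). Then arctan((a + b − 2)/d) = π/2 + φ − φₐ − φ_b. -/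
open Real

private lemma frac_eq (a b d : ℝ) (hd0 : d ≠ 0) (hd2 : d ^ 2 = 4 - a ^ 2 - b ^ 2)
    (hne : d ^ 2 - a * b ≠ 0) :
    ((a + b - 2) / d + (a + b + 2) / d) / (1 - (a + b - 2) / d * ((a + b + 2) / d))
      = (a / d + b / d) / (1 - a / d * (b / d)) := by
  have h1 : 1 - (a + b - 2) / d * ((a + b + 2) / d) = 2 * (d ^ 2 - a * b) / d ^ 2 := by
    field_simp
    linear_combination (-1) * hd2
  have h2 : 1 - a / d * (b / d) = (d ^ 2 - a * b) / d ^ 2 := by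
    field_simp
  have h3 : 2 * (d ^ 2 - a * b) / d ^ 2 ≠ 0 :=
    div_ne_zero (by intro hc; apply hne; linarith) (by positivity)
  have h4 : (d ^ 2 - a * b) / d ^ 2 ≠ 0 := div_ne_zero hne (by positivity)
  rw [h1, h2, div_eq_div_iff h3 h4]
  field_simp
  ring

set_option maxHeartbeats 1000000 in
theorem stmt14 (a b d p φ φa φb : ℝ) (ha : 0 < a) (hb : 0 < b) (hab : a ^ 2 + b ^ 2 < 4)
    (hd : d = Real.sqrt (4 - a ^ 2 - b ^ 2)) (hp : p = a + b + 2)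
    (hφ : φ = Real.arctan (d / p)) (hφa : φa = Real.arctan (d / a))
    (hφb : φb = Real.arctan (d / b)) :
    Real.arctan ((a + b - 2) / d) = π / 2 + φ - φa - φb := by
  have hd0 : 0 < d := by
    rw [hd]; exact Real.sqrt_pos.mpr (by linarith)
  have hd2 : d ^ 2 = 4 - a ^ 2 - b ^ 2 := by
    rw [hd, sq, Real.mul_self_sqrt (by linarith)]
  have hp0 : 0 < p := by rw [hp]; linarith
  have hφ' : φ = π / 2 - Real.arctan (p / d) := by
    rw [hφ, show d / p = (p / d)⁻¹ by field_simp,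
      Real.arctan_inv_of_pos (div_pos hp0 hd0)]
  have hφa' : φa = π / 2 - Real.arctan (a / d) := by
    rw [hφa, show d / a = (a / d)⁻¹ by field_simp,
      Real.arctan_inv_of_pos (div_pos ha hd0)]
  have hφb' : φb = π / 2 - Real.arctan (b / d) := by
    rw [hφb, show d / b = (b / d)⁻¹ by field_simp,
      Real.arctan_inv_of_pos (div_pos hb hd0)]
  rw [hφ', hφa', hφb', hp]
  have hxy : (a + b - 2) / d * ((a + b + 2) / d) = ((a + b) ^ 2 - 4) / d ^ 2 := by
    field_simp; ring
  have huv : a / d * (b / d) = a * b / d ^ 2 := by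
    field_simp
  have hu0 : 0 < a / d := div_pos ha hd0
  have key : Real.arctan ((a + b - 2) / d) + Real.arctan ((a + b + 2) / d)
      = Real.arctan (a / d) + Real.arctan (b / d) := by
    rcases lt_trichotomy (a ^ 2 + b ^ 2 + a * b) 4 with h | h | h
    · have h1 : (a + b - 2) / d * ((a + b + 2) / d) < 1 := by
        rw [hxy, div_lt_one (pow_pos hd0 2)]; nlinarith
      have h2 : a / d * (b / d) < 1 := by
        rw [huv, div_lt_one (pow_pos hd0 2)]; nlinarith
      rw [Real.arctan_add h1, Real.arctan_add h2,
        frac_eq a b d hd0.ne' hd2 (by nlinarith)]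
    · -- boundary: products equal 1
      have hs2 : 2 < a + b := by nlinarith
      have hx0 : 0 < (a + b - 2) / d := div_pos (by linarith) hd0
      have hxy1 : (a + b - 2) / d * ((a + b + 2) / d) = 1 := by
        rw [hxy, div_eq_one_iff_eq (pow_pos hd0 2).ne']; nlinarith
      have huv1 : a / d * (b / d) = 1 := by
        rw [huv, div_eq_one_iff_eq (pow_pos hd0 2).ne']; nlinarith
      have hyx : (a + b + 2) / d = ((a + b - 2) / d)⁻¹ := by
        exact eq_inv_of_mul_eq_one_right hxy1
      have hvu : b / d = (a / d)⁻¹ := by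
        exact eq_inv_of_mul_eq_one_right huv1
      rw [hyx, hvu, Real.arctan_inv_of_pos hx0, Real.arctan_inv_of_pos hu0]
      ring
    · have hs2 : 2 < a + b := by nlinarith
      have hx0 : 0 < (a + b - 2) / d := div_pos (by linarith) hd0
      have h1 : 1 < (a + b - 2) / d * ((a + b + 2) / d) := by
        rw [hxy, lt_div_iff₀ (pow_pos hd0 2)]; nlinarith
      have h2 : 1 < a / d * (b / d) := by
        rw [huv, lt_div_iff₀ (pow_pos hd0 2)]; nlinarith
      rw [Real.arctan_add_eq_add_pi h1 hx0, Real.arctan_add_eq_add_pi h2 hu0,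
        frac_eq a b d hd0.ne' hd2 (by nlinarith)]
  linarith [key]
end

section
/- For every real z with −1 < z < 1, ∑_{n=1}^∞ (H_n/(2n+1))·z^{2n+1} = (1/2)·( (1/2)·log²(1 − z) − (1/2)·log²(1 + z) + log(2)·log((1 − z)/(1 + z)) + Li₂((1 + z)/2) − Li₂((1 − z)/2) ), where H_n = ∑_{k=1}^n 1/k. -/
open Real

/-- The `n`-th harmonic number `H_n = ∑_{k=1}^n 1/k`. -/
noncomputable def H (n : ℕ) : ℝ := ∑ k ∈ Finset.range n, 1 / ((k : ℝ) + 1)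

/-- The real dilogarithm `Li₂(x) = ∑_{n=1}^∞ xⁿ/n²` (for `|x| ≤ 1`). -/
noncomputable def Li2 (x : ℝ) : ℝ := ∑' n : ℕ, x ^ (n + 1) / ((n : ℝ) + 1) ^ 2


lemma H_nonneg (n : ℕ) : 0 ≤ H n :=
  Finset.sum_nonneg fun k _ => by positivity

lemma H_le (n : ℕ) : H n ≤ n := by
  calc H n ≤ ∑ k ∈ Finset.range n, 1 := Finset.sum_le_sum fun k _ => by
        rw [div_le_one (by positivity)]; linarith [Nat.cast_nonneg (α := ℝ) k]
    _ = n := by simp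

/-- generating function of harmonic numbers -/
lemma harmonic_hasSum {y : ℝ} (hy : |y| < 1) :
    HasSum (fun n : ℕ => H (n + 1) * y ^ (n + 1)) (-Real.log (1 - y) * (1 - y)⁻¹) := by
  have hf : Summable (fun n : ℕ => ‖y ^ (n + 1) / ((n : ℝ) + 1)‖) := by
    apply Summable.of_nonneg_of_le (fun n => norm_nonneg _) (fun n => ?_)
      ((summable_geometric_of_lt_one (abs_nonneg y) hy).mul_left |y|)
    rw [norm_div, norm_pow, Real.norm_eq_abs, Real.norm_eq_abs, pow_succ']
    rw [abs_of_nonneg (by positivity : (0:ℝ) ≤ (n:ℝ)+1)]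
    exact div_le_self (by positivity) (by push_cast; linarith [Nat.cast_nonneg (α := ℝ) n])
  have hg : Summable (fun n : ℕ => ‖y ^ n‖) := by
    simpa [norm_pow] using summable_geometric_of_lt_one (abs_nonneg y) hy
  have hc := hasSum_sum_range_mul_of_summable_norm (R := ℝ) hf hg
  rw [(hasSum_pow_div_log_of_abs_lt_one hy).tsum_eq,
    (hasSum_geometric_of_norm_lt_one (by simpa using hy)).tsum_eq] at hc
  convert hc using 2 with n
  · rfl
  rw [H, Finset.sum_mul]
  apply Finset.sum_congr rfl
  intro k hk
  rw [Finset.mem_range] at hk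
  have : y ^ (k + 1) * y ^ (n - k) = y ^ (n + 1) := by
    rw [← pow_add]; congr 1; omega
  rw [← this]; ring



lemma log_series_div {x : ℝ} (hx : |x| < 1) (hx0 : x ≠ 0) :
    HasSum (fun n : ℕ => x ^ n / ((n : ℝ) + 1)) (-Real.log (1 - x) / x) := by
  have h := (hasSum_pow_div_log_of_abs_lt_one hx).mul_right x⁻¹
  rw [div_eq_mul_inv]
  convert h using 2 with n
  · rfl
  rw [pow_succ]
  field_simp

lemma Li2_hasDerivAt {x : ℝ} (hx0 : 0 < x) (hx1 : x < 1) :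
    HasDerivAt Li2 (-Real.log (1 - x) / x) x := by
  set r : ℝ := (1 + x) / 2 with hr
  have hr0 : 0 < r := by rw [hr]; linarith
  have hr1 : r < 1 := by rw [hr]; linarith
  have hxr : x < r := by rw [hr]; linarith
  have hu : Summable (fun n : ℕ => r ^ n) := summable_geometric_of_lt_one hr0.le hr1
  have hLi : Li2 = fun y : ℝ => ∑' n : ℕ, y ^ (n + 1) / ((n : ℝ) + 1) ^ 2 := rfl
  rw [hLi]
  have key : HasDerivAt (fun y : ℝ => ∑' n : ℕ, y ^ (n + 1) / ((n : ℝ) + 1) ^ 2)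
      (∑' n : ℕ, x ^ n / ((n : ℝ) + 1)) x :=
    hasDerivAt_tsum_of_isPreconnected (u := fun n : ℕ => r ^ n)
      (g := fun n (y : ℝ) => y ^ (n + 1) / ((n : ℝ) + 1) ^ 2)
      (g' := fun n (y : ℝ) => y ^ n / ((n : ℝ) + 1))
      (y₀ := 0) (y := x) hu (isOpen_Ioo (a := -r) (b := r))
      (convex_Ioo _ _).isPreconnected ?_ ?_ ?_ ?_ ?_
  · rw [(log_series_div (by rw [abs_of_pos hx0]; exact hx1) hx0.ne').tsum_eq] at key
    exact key
  · intro n y hy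
    have hn : ((n : ℝ) + 1) ≠ 0 := by positivity
    have := (hasDerivAt_pow (n + 1) y).div_const (((n : ℝ) + 1) ^ 2)
    convert this using 1
    · rfl
    push_cast
    field_simp
  · intro n y hy
    rw [Set.mem_Ioo] at hy
    have hya : |y| ≤ r := by rw [abs_le]; constructor <;> linarith [hy.1, hy.2]
    rw [norm_div, norm_pow, Real.norm_eq_abs, Real.norm_eq_abs,
      abs_of_nonneg (by positivity : (0:ℝ) ≤ (n:ℝ) + 1)]
    calc |y| ^ n / ((n : ℝ) + 1) ≤ |y| ^ n / 1 := by
          apply div_le_div_of_nonneg_left (by positivity) one_pos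
          push_cast; linarith [Nat.cast_nonneg (α := ℝ) n]
      _ = |y| ^ n := by rw [div_one]
      _ ≤ r ^ n := pow_le_pow_left₀ (abs_nonneg _) hya n
  · rw [Set.mem_Ioo]; constructor <;> linarith
  · simpa using summable_zero
  · rw [Set.mem_Ioo]; constructor <;> linarith

lemma G_hasDerivAt {z : ℝ} (hz : |z| < 1) :
    HasDerivAt (fun w : ℝ => ∑' n : ℕ, H (n + 1) / (2 * ((n : ℝ) + 1) + 1) * w ^ (2 * (n + 1) + 1))
      (-Real.log (1 - z ^ 2) * (1 - z ^ 2)⁻¹) z := by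
  set r : ℝ := (1 + |z|) / 2 with hr
  have hz0 : 0 ≤ |z| := abs_nonneg z
  have hr0 : 0 < r := by rw [hr]; linarith
  have hr1 : r < 1 := by rw [hr]; linarith
  have hzr : |z| < r := by rw [hr]; linarith
  have hu : Summable (fun n : ℕ => ((n : ℝ) + 1) * r ^ (2 * (n + 1))) := by
    have hrr : ‖r ^ 2‖ < 1 := by
      rw [Real.norm_eq_abs, abs_of_nonneg (by positivity)]; nlinarith
    have h0 := summable_pow_mul_geometric_of_norm_lt_one (R := ℝ) 1 hrr
    have hg := summable_geometric_of_norm_lt_one hrr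
    refine (((h0.add hg).mul_left (r ^ 2)).congr fun n => ?_)
    rw [← pow_mul]
    ring
  have key : HasDerivAt
      (fun w : ℝ => ∑' n : ℕ, H (n + 1) / (2 * ((n : ℝ) + 1) + 1) * w ^ (2 * (n + 1) + 1))
      (∑' n : ℕ, H (n + 1) * z ^ (2 * (n + 1))) z :=
    hasDerivAt_tsum_of_isPreconnected (u := fun n : ℕ => ((n : ℝ) + 1) * r ^ (2 * (n + 1)))
      (g := fun n (w : ℝ) => H (n + 1) / (2 * ((n : ℝ) + 1) + 1) * w ^ (2 * (n + 1) + 1))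
      (g' := fun n (w : ℝ) => H (n + 1) * w ^ (2 * (n + 1)))
      (y₀ := 0) (y := z) hu (isOpen_Ioo (a := -r) (b := r))
      (convex_Ioo _ _).isPreconnected ?_ ?_ ?_ ?_ ?_
  · have hz2 : |z ^ 2| < 1 := by
      rw [abs_of_nonneg (sq_nonneg z)]; nlinarith [sq_abs z]
    have hsum := harmonic_hasSum hz2
    have heq : (∑' n : ℕ, H (n + 1) * z ^ (2 * (n + 1)))
        = ∑' n : ℕ, H (n + 1) * (z ^ 2) ^ (n + 1) := by
      congr 1; funext n; rw [← pow_mul]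
    rw [heq, hsum.tsum_eq] at key
    exact key
  · intro n w hw
    have hd := (hasDerivAt_pow (2 * (n + 1) + 1) w).const_mul (H (n + 1) / (2 * ((n : ℝ) + 1) + 1))
    convert hd using 1
    · rfl
    have h2 : ((2 * (n + 1) + 1 : ℕ) : ℝ) = 2 * ((n : ℝ) + 1) + 1 := by push_cast; ring
    have h3 : 2 * (n + 1) + 1 - 1 = 2 * (n + 1) := rfl
    rw [h2, h3]
    have hne : 2 * ((n : ℝ) + 1) + 1 ≠ 0 := by positivity
    field_simp
  · intro n w hw
    rw [Set.mem_Ioo] at hw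
    have hwa : |w| ≤ r := by rw [abs_le]; constructor <;> linarith [hw.1, hw.2]
    rw [Real.norm_eq_abs, abs_mul, abs_of_nonneg (H_nonneg _), abs_pow]
    apply mul_le_mul _ (pow_le_pow_left₀ (abs_nonneg _) hwa _) (by positivity) (by positivity)
    calc H (n + 1) ≤ ((n + 1 : ℕ) : ℝ) := H_le _
      _ = (n : ℝ) + 1 := by push_cast; ring
  · rw [Set.mem_Ioo]; constructor <;> linarith
  · simpa using summable_zero
  · rw [Set.mem_Ioo]; exact abs_lt.1 hzr

theorem stmt15 (z : ℝ) (h1 : -1 < z) (h2 : z < 1) :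
    ∑' n : ℕ, H (n + 1) / (2 * ((n : ℝ) + 1) + 1) * z ^ (2 * (n + 1) + 1) =
      (1 / 2) * ((1 / 2) * Real.log (1 - z) ^ 2 - (1 / 2) * Real.log (1 + z) ^ 2
        + Real.log 2 * Real.log ((1 - z) / (1 + z))
        + Li2 ((1 + z) / 2) - Li2 ((1 - z) / 2)) := by
  have h1z : (0:ℝ) < 1 - z := by linarith
  have h2z : (0:ℝ) < 1 + z := by linarith
  let G : ℝ → ℝ := fun w => ∑' n : ℕ, H (n + 1) / (2 * ((n : ℝ) + 1) + 1) * w ^ (2 * (n + 1) + 1)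
  let F : ℝ → ℝ := fun w => (1/2) * ((1/2) * Real.log (1 - w) ^ 2 - (1/2) * Real.log (1 + w) ^ 2
      + Real.log 2 * (Real.log (1 - w) - Real.log (1 + w)) + Li2 ((1 + w) / 2) - Li2 ((1 - w) / 2))
  have hGderiv : ∀ w ∈ Set.Ioo (-1:ℝ) 1, HasDerivAt G (-Real.log (1 - w^2) * (1 - w^2)⁻¹) w :=
    fun w hw => G_hasDerivAt (abs_lt.2 ⟨hw.1, hw.2⟩)
  have hFderiv : ∀ w ∈ Set.Ioo (-1:ℝ) 1, HasDerivAt F (-Real.log (1 - w^2) * (1 - w^2)⁻¹) w := by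
    intro w hw
    obtain ⟨hw1, hw2⟩ := hw
    have h1w : (0:ℝ) < 1 - w := by linarith
    have h2w : (0:ℝ) < 1 + w := by linarith
    have ha : HasDerivAt (fun y : ℝ => Real.log (1 - y)) (-(1 - w)⁻¹) w := by
      have h := (Real.hasDerivAt_log h1w.ne').comp w ((hasDerivAt_id w).const_sub 1)
      refine h.congr_deriv ?_
      symm
      simp [mul_comm]
    have hb : HasDerivAt (fun y : ℝ => Real.log (1 + y)) ((1 + w)⁻¹) w := by
      have h := (Real.hasDerivAt_log h2w.ne').comp w ((hasDerivAt_id w).const_add 1)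
      refine h.congr_deriv ?_
      symm
      simp
    have hA := (ha.pow 2).const_mul (1/2 : ℝ)
    have hB := (hb.pow 2).const_mul (1/2 : ℝ)
    have hC := (ha.sub hb).const_mul (Real.log 2)
    have hp : HasDerivAt (fun y : ℝ => (1 + y) / 2) (1/2 : ℝ) w := by
      simpa using ((hasDerivAt_id w).const_add 1).div_const 2
    have hq : HasDerivAt (fun y : ℝ => (1 - y) / 2) (-(1/2) : ℝ) w := by
      simpa [neg_div] using ((hasDerivAt_id w).const_sub 1).div_const 2
    have hD := (Li2_hasDerivAt (x := (1 + w)/2) (by linarith) (by linarith)).comp w hp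
    have hE := (Li2_hasDerivAt (x := (1 - w)/2) (by linarith) (by linarith)).comp w hq
    have hF' := ((((hA.sub hB).add hC).add hD).sub hE).const_mul (1/2 : ℝ)
    refine hF'.congr_deriv ?_
    symm
    have e1 : (1:ℝ) - (1 + w)/2 = (1 - w)/2 := by ring
    have e2 : (1:ℝ) - (1 - w)/2 = (1 + w)/2 := by ring
    rw [e1, e2, Real.log_div h1w.ne' two_ne_zero, Real.log_div h2w.ne' two_ne_zero,
      show (1:ℝ) - w^2 = (1 - w) * (1 + w) by ring, Real.log_mul h1w.ne' h2w.ne']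
    push_cast
    field_simp
    ring
  have hconst : G z - F z = G 0 - F 0 := by
    apply (convex_Ioo (-1:ℝ) 1).is_const_of_fderivWithin_eq_zero (𝕜 := ℝ)
      (f := fun w => G w - F w) ?_ ?_ ⟨h1, h2⟩ (by constructor <;> norm_num)
    · intro u hu
      exact ((hGderiv u hu).sub (hFderiv u hu)).differentiableAt.differentiableWithinAt
    · intro u hu
      have h0 : HasDerivAt (fun w => G w - F w) 0 u := by
        exact ((hGderiv u hu).sub (hFderiv u hu)).congr_deriv (sub_self _)
      rw [(hasDerivAt_iff_hasFDerivAt.1 h0).hasFDerivWithinAt.fderivWithin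
        (isOpen_Ioo.uniqueDiffWithinAt hu)]
      ext v
      simp
  have hG0 : G 0 = 0 := by
    simp [G]
  have hF0 : F 0 = 0 := by
    norm_num [F, Real.log_one]
  rw [Real.log_div h1z.ne' h2z.ne']
  have : G z = F z := by rw [hG0, hF0] at hconst; linarith
  exact this
end

section
/- Let u = (√8 + i)/3 and x = (1/2)·(1 + i/√8) be complex numbers. Then Li₂(u⁴) = 2·Li₂(u²) − 2·Li₂(x) − (Log(1 − x))², where Li₂(w) = ∑_{n=1}^∞ wⁿ/n² (which converges since |u| = 1 and |x| < 1) and Log denotes the principal branch of the complex logarithm. -/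
/-- The complex dilogarithm `Li₂(w) = ∑_{n=1}^∞ wⁿ/n²` (for `|w| ≤ 1`). -/
noncomputable def Li2C (w : ℂ) : ℂ := ∑' n : ℕ, w ^ (n + 1) / ((n : ℂ) + 1) ^ 2

open Complex Metric Set Filter Topology


lemma inv_sq_summable : Summable (fun n : ℕ => 1 / ((n : ℝ) + 1) ^ 2) := by
  have h : Summable (fun n : ℕ => 1 / (n : ℝ) ^ 2) := by
    simpa using Real.summable_one_div_nat_pow.mpr one_lt_two
  have := (summable_nat_add_iff 1).mpr h
  simpa using this

lemma norm_nat_add_one (n : ℕ) : ‖(n : ℂ) + 1‖ = (n : ℝ) + 1 := by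
  rw [show ((n : ℂ) + 1) = ((n + 1 : ℕ) : ℂ) by push_cast; ring]
  rw [Complex.norm_natCast]; push_cast; ring

lemma li2_term_bound {w : ℂ} (hw : ‖w‖ ≤ 1) (n : ℕ) :
    ‖w ^ (n + 1) / ((n : ℂ) + 1) ^ 2‖ ≤ 1 / ((n : ℝ) + 1) ^ 2 := by
  rw [norm_div, norm_pow, norm_pow, norm_nat_add_one]
  have hb : ‖w‖ ^ (n + 1) ≤ 1 := pow_le_one₀ (norm_nonneg _) hw
  have hp : (0:ℝ) < ((n : ℝ) + 1) ^ 2 := by positivity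
  exact div_le_div_of_nonneg_right hb hp.le

lemma li2_summable {w : ℂ} (hw : ‖w‖ ≤ 1) :
    Summable (fun n : ℕ => w ^ (n + 1) / ((n : ℂ) + 1) ^ 2) :=
  Summable.of_norm_bounded inv_sq_summable (li2_term_bound hw)

lemma li2_continuousOn : ContinuousOn Li2C (closedBall (0:ℂ) 1) := by
  have := tendstoUniformlyOn_tsum (f := fun (n : ℕ) (w : ℂ) => w ^ (n + 1) / ((n : ℂ) + 1) ^ 2)
    inv_sq_summable (s := closedBall (0:ℂ) 1) (fun n w hw => li2_term_bound (by simpa using hw) n)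
  exact this.continuousOn (Filter.Eventually.frequently (Filter.Eventually.of_forall fun t => by
    exact continuousOn_finset_sum t fun n _ => (continuousOn_pow _).div_const _))

lemma li2_zero : Li2C 0 = 0 := by
  simp [Li2C]

noncomputable def li2d (z : ℂ) : ℂ := ∑' n : ℕ, z ^ n / ((n : ℂ) + 1)

lemma li2_hasDerivAt {z : ℂ} (hz : ‖z‖ < 1) : HasDerivAt Li2C (li2d z) z := by
  set r : ℝ := (1 + ‖z‖) / 2 with hr
  have hr0 : 0 < r := by positivity
  have hr1 : r < 1 := by rw [hr]; linarith
  have hzr : z ∈ ball (0:ℂ) r := by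
    simp only [mem_ball, dist_zero_right]; rw [hr]; linarith
  have key : HasDerivAt (fun w => ∑' n : ℕ, w ^ (n + 1) / ((n : ℂ) + 1) ^ 2)
      (∑' n : ℕ, z ^ n / ((n : ℂ) + 1)) z := by
    refine hasDerivAt_tsum_of_isPreconnected (u := fun n : ℕ => r ^ n)
      (summable_geometric_of_lt_one hr0.le hr1) isOpen_ball
      (convex_ball _ _).isPreconnected
      (g := fun n w => w ^ (n + 1) / ((n : ℂ) + 1) ^ 2)
      (g' := fun n w => w ^ n / ((n : ℂ) + 1))
      (fun n y _ => ?_) (fun n y hy => ?_) (mem_ball_self hr0) ?_ hzr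
    · have h1 : ((n : ℂ) + 1) ≠ 0 := by
        exact_mod_cast Nat.cast_add_one_ne_zero (R := ℂ) n
      have := (hasDerivAt_pow (n + 1) y).div_const (((n : ℂ) + 1) ^ 2)
      refine this.congr_deriv ?_
      push_cast
      field_simp
    · rw [norm_div, norm_pow]
      have h1 : ‖(n : ℂ) + 1‖ = (n : ℝ) + 1 := by
        rw [show ((n : ℂ) + 1) = ((n + 1 : ℕ) : ℂ) by push_cast; ring, Complex.norm_natCast]
        push_cast; ring
      rw [h1]
      have hy' : ‖y‖ ≤ r := by
        simpa [dist_zero_right] using (mem_ball.mp hy).le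
      calc ‖y‖ ^ n / ((n:ℝ) + 1) ≤ ‖y‖ ^ n / 1 := by
            apply div_le_div_of_nonneg_left (by positivity) one_pos
            simp
        _ = ‖y‖ ^ n := by simp
        _ ≤ r ^ n := pow_le_pow_left₀ (norm_nonneg _) hy' n
    · exact summable_of_ne_finset_zero (s := {}) (fun n _ => by simp)
  exact key

lemma li2d_eq {z : ℂ} (hz : ‖z‖ < 1) (hz0 : z ≠ 0) :
    li2d z = -Complex.log (1 - z) / z := by
  have h := Complex.hasSum_taylorSeries_neg_log hz
  -- ∑ n, z^n / n = -log(1-z), index from 0, term 0 is 0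
  have h2 : HasSum (fun n : ℕ => z ^ (n + 1) / ((n : ℂ) + 1)) (-Complex.log (1 - z)) := by
    have := (hasSum_nat_add_iff' 1).mpr h
    simpa using this
  have h3 : HasSum (fun n : ℕ => z ^ n / ((n : ℂ) + 1)) (-Complex.log (1 - z) / z) := by
    have := h2.div_const z
    refine this.congr_fun fun n => ?_
    have hn : ((n:ℂ)+1) ≠ 0 := Nat.cast_add_one_ne_zero n
    rw [pow_succ]
    field_simp
  exact h3.tsum_eq

noncomputable def FL (z : ℂ) : ℂ :=
  2 * Li2C (z / (z - 1)) + 2 * Li2C z + (Complex.log (1 - z)) ^ 2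

lemma norm_lt_of_re_lt {z : ℂ} (h : z.re < 1/2) : ‖z‖ < ‖z - 1‖ := by
  have h1 : Complex.normSq z < Complex.normSq (z - 1) := by
    simp only [Complex.normSq_apply, Complex.sub_re, Complex.sub_im, Complex.one_re,
      Complex.one_im]
    nlinarith [sq_nonneg z.im]
  have : ‖z‖ < ‖z - 1‖ := by
    rw [Complex.norm_def, Complex.norm_def]
    exact Real.sqrt_lt_sqrt (Complex.normSq_nonneg _) h1
  exact this

lemma norm_le_of_re_le {z : ℂ} (h : z.re ≤ 1/2) : ‖z‖ ≤ ‖z - 1‖ := by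
  have h1 : Complex.normSq z ≤ Complex.normSq (z - 1) := by
    simp only [Complex.normSq_apply, Complex.sub_re, Complex.sub_im, Complex.one_re,
      Complex.one_im]
    nlinarith [sq_nonneg z.im]
  have : ‖z‖ ≤ ‖z - 1‖ := by
    rw [Complex.norm_def, Complex.norm_def]
    exact Real.sqrt_le_sqrt h1
  exact this

lemma sub_one_ne_zero_of_re_le {z : ℂ} (h : z.re ≤ 1/2) : z - 1 ≠ 0 := by
  intro hc
  have hz1 : z = 1 := sub_eq_zero.mp hc
  rw [hz1] at h
  norm_num at h

lemma slit_of_re_le {z : ℂ} (h : z.re ≤ 1/2) : 1 - z ∈ Complex.slitPlane := by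
  rw [Complex.mem_slitPlane_iff]
  left
  simp only [Complex.sub_re, Complex.one_re]
  linarith

lemma FL_hasDerivAt_zero {z : ℂ} (hz : ‖z‖ < 1) (hre : z.re < 1/2) :
    HasDerivAt FL 0 z := by
  have h1 : z - 1 ≠ 0 := sub_one_ne_zero_of_re_le hre.le
  have hw : ‖z / (z - 1)‖ < 1 := by
    rw [norm_div, div_lt_one (norm_pos_iff.mpr h1)]
    exact norm_lt_of_re_lt hre
  have hslit : 1 - z ∈ Complex.slitPlane := slit_of_re_le hre.le
  -- derivative of inner map
  have hm : HasDerivAt (fun w => w / (w - 1)) (-1 / (z - 1) ^ 2) z := by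
    have := (hasDerivAt_id z).div ((hasDerivAt_id z).sub_const 1) h1
    refine this.congr_deriv ?_
    simp only [id]; ring
  have hA : HasDerivAt (fun w => Li2C (w / (w - 1))) (li2d (z / (z - 1)) * (-1 / (z - 1) ^ 2)) z :=
    (li2_hasDerivAt hw).comp (h₂ := Li2C) z hm
  have hB : HasDerivAt Li2C (li2d z) z := li2_hasDerivAt hz
  have hlog : HasDerivAt (fun w => Complex.log (1 - w)) (-(1 - z)⁻¹) z := by
    have hinner : HasDerivAt (fun w : ℂ => 1 - w) (-1) z := by
      simpa using ((hasDerivAt_id z).const_sub 1)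
    have := (Complex.hasDerivAt_log hslit).comp z hinner
    exact this.congr_deriv (by simp [mul_comm])
  have hC : HasDerivAt (fun w => (Complex.log (1 - w)) ^ 2)
      (2 * Complex.log (1 - z) * (-(1 - z)⁻¹)) z := by
    have := hlog.pow 2
    refine this.congr_deriv ?_
    ring
  have htot := ((hA.const_mul 2).add (hB.const_mul 2)).add hC
  have hkey : 2 * (li2d (z / (z - 1)) * (-1 / (z - 1) ^ 2)) + 2 * li2d z
      + 2 * Complex.log (1 - z) * (-(1 - z)⁻¹) = 0 := by
    rcases eq_or_ne z 0 with rfl | hz0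
    · have h0 : li2d 0 = 1 := by
        rw [li2d, tsum_eq_single 0 (fun n hn => by
          simp [zero_pow hn])]
        simp
      simp [h0]
    · have hw0 : z / (z - 1) ≠ 0 := div_ne_zero hz0 h1
      have e1 : li2d z = -Complex.log (1 - z) / z := li2d_eq hz hz0
      have e2 : li2d (z / (z - 1)) = Complex.log (1 - z) * (z - 1) / z := by
        rw [li2d_eq hw hw0]
        have h1z : (1 : ℂ) - z ≠ 0 := by
          intro hc; exact h1 (by rw [← neg_sub] at hc; simpa using neg_eq_zero.mp hc)
        have h1mw : 1 - z / (z - 1) = (1 - z)⁻¹ := by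
          refine eq_inv_of_mul_eq_one_left ?_
          field_simp
          ring
        rw [h1mw, Complex.log_inv _ (Complex.mem_slitPlane_iff_arg.mp hslit).1]
        field_simp
      rw [e1, e2]
      have h1z : (1 : ℂ) - z ≠ 0 := by
        intro hc; exact h1 (by rw [← neg_sub] at hc; simpa using neg_eq_zero.mp hc)
      field_simp
      ring
  have : HasDerivAt FL (2 * (li2d (z / (z - 1)) * (-1 / (z - 1) ^ 2)) + 2 * li2d z
      + 2 * Complex.log (1 - z) * (-(1 - z)⁻¹)) z := by
    exact htot
  rwa [hkey] at this

lemma FL_eq_zero_on {z : ℂ} (hz1 : ‖z‖ < 1) (hz2 : z.re < 1/2) : FL z = 0 := by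
  set U : Set ℂ := ball (0:ℂ) 1 ∩ {w | w.re < 1/2} with hU
  have hUopen : IsOpen U := isOpen_ball.inter (isOpen_lt Complex.continuous_re continuous_const)
  have hUconv : Convex ℝ U := (convex_ball _ _).inter (convex_halfSpace_re_lt _)
  have hmem : ∀ w ∈ U, ‖w‖ < 1 ∧ w.re < 1/2 := by
    intro w hw
    exact ⟨by simpa [dist_zero_right] using hw.1, hw.2⟩
  have hz : z ∈ U := ⟨by simpa [dist_zero_right] using hz1, hz2⟩
  have h0 : (0:ℂ) ∈ U := ⟨by simp, by norm_num⟩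
  have hD : ∀ w ∈ U, HasDerivAt FL 0 w := fun w hw =>
    FL_hasDerivAt_zero (hmem w hw).1 (hmem w hw).2
  have hconst : FL z = FL 0 := by
    refine hUconv.is_const_of_fderivWithin_eq_zero (𝕜 := ℂ)
      (fun w hw => ((hD w hw).differentiableAt).differentiableWithinAt)
      (fun w hw => ?_) hz h0
    have hF : HasFDerivAt FL (0 : ℂ →L[ℂ] ℂ) w := by
      have := (hD w hw).hasFDerivAt
      simpa using this
    rw [hF.hasFDerivWithinAt.fderivWithin (hUopen.uniqueDiffWithinAt hw)]
  rw [hconst]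
  simp [FL, li2_zero, Complex.log_one]

lemma landen {z : ℂ} (h2 : ‖z‖ < 1) (h1 : z.re ≤ 1/2) :
    2 * Li2C (z / (z - 1)) + 2 * Li2C z + (Complex.log (1 - z)) ^ 2 = 0 := by
  have h1' : z - 1 ≠ 0 := sub_one_ne_zero_of_re_le h1
  -- continuity of FL at z within S
  set S : Set ℂ := {w | w.re ≤ 1/2} with hS
  have hzS : z ∈ S := h1
  have hcont : ContinuousWithinAt FL S z := by
    have hinner : ContinuousAt (fun w : ℂ => w / (w - 1)) z :=
      (continuousAt_id).div ((continuousAt_id).sub continuousAt_const) h1'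
    have hmapsTo : MapsTo (fun w : ℂ => w / (w - 1)) S (closedBall (0:ℂ) 1) := by
      intro w hw
      have hw1 : w - 1 ≠ 0 := sub_one_ne_zero_of_re_le hw
      simp only [mem_closedBall, dist_zero_right, norm_div]
      rw [div_le_one (norm_pos_iff.mpr hw1)]
      exact norm_le_of_re_le hw
    have hA : ContinuousWithinAt (fun w => Li2C (w / (w - 1))) S z := by
      have : ContinuousWithinAt (Li2C ∘ fun w : ℂ => w / (w - 1)) S z :=
        ContinuousWithinAt.comp (li2_continuousOn (z / (z - 1)) (hmapsTo hzS))
          hinner.continuousWithinAt hmapsTo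
      exact this
    have hB : ContinuousWithinAt Li2C S z :=
      ((li2_hasDerivAt h2).continuousAt).continuousWithinAt
    have hC : ContinuousWithinAt (fun w => (Complex.log (1 - w)) ^ 2) S z := by
      have : ContinuousAt (fun w : ℂ => Complex.log (1 - w)) z := by
        have h' : ContinuousAt (Complex.log ∘ fun w : ℂ => 1 - w) z :=
          ContinuousAt.comp (continuousAt_clog (slit_of_re_le h1))
            (continuousAt_const.sub continuousAt_id)
        exact h'
      exact (this.pow 2).continuousWithinAt
    exact ((hA.const_smul (2:ℂ)).add (hB.const_smul (2:ℂ))).add hC |>.congr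
      (fun w _ => by simp [FL, smul_eq_mul]) (by simp [FL, smul_eq_mul])
  -- approach along t * z
  have hpath : Tendsto (fun t : ℝ => (t : ℂ) * z) (𝓝[Ioo (0:ℝ) 1] 1) (𝓝[S] z) := by
    rw [tendsto_nhdsWithin_iff]
    constructor
    · have : Tendsto (fun t : ℝ => (t : ℂ) * z) (𝓝 1) (𝓝 ((1:ℂ) * z)) :=
        (Complex.continuous_ofReal.mul continuous_const).tendsto 1
      simpa using this.mono_left nhdsWithin_le_nhds
    · filter_upwards [self_mem_nhdsWithin] with t ht
      simp only [hS, mem_setOf_eq, Complex.mul_re, Complex.ofReal_re, Complex.ofReal_im]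
      nlinarith [ht.1, ht.2, h1]
  have hNe : (𝓝[Ioo (0:ℝ) 1] (1:ℝ)).NeBot := by
    refine mem_closure_iff_nhdsWithin_neBot.mp ?_
    rw [closure_Ioo (by norm_num : (0:ℝ) ≠ 1)]
    exact ⟨by norm_num, le_refl 1⟩
  have hlim : Tendsto (fun t : ℝ => FL ((t:ℂ) * z)) (𝓝[Ioo (0:ℝ) 1] 1) (𝓝 (FL z)) :=
    hcont.tendsto.comp hpath
  have hzero : Tendsto (fun t : ℝ => FL ((t:ℂ) * z)) (𝓝[Ioo (0:ℝ) 1] 1) (𝓝 0) := by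
    refine Tendsto.congr' ?_ tendsto_const_nhds
    filter_upwards [self_mem_nhdsWithin] with t ht
    refine (FL_eq_zero_on ?_ ?_).symm
    · rw [norm_mul, Complex.norm_real]
      calc ‖t‖ * ‖z‖ ≤ 1 * ‖z‖ := by
            apply mul_le_mul_of_nonneg_right _ (norm_nonneg z)
            rw [Real.norm_eq_abs, abs_of_pos ht.1]; exact ht.2.le
        _ = ‖z‖ := one_mul _
        _ < 1 := h2
    · simp only [Complex.mul_re, Complex.ofReal_re, Complex.ofReal_im]
      nlinarith [ht.1, ht.2, h1]
  have := tendsto_nhds_unique hlim hzero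
  simpa [FL] using this

lemma li2_dup {z : ℂ} (hz : ‖z‖ ≤ 1) : Li2C (z ^ 2) = 2 * (Li2C z + Li2C (-z)) := by
  set f : ℕ → ℂ := fun n => z ^ (n + 1) / ((n : ℂ) + 1) ^ 2 + (-z) ^ (n + 1) / ((n : ℂ) + 1) ^ 2
    with hf
  have hz' : ‖-z‖ ≤ 1 := by simpa using hz
  have hz2 : ‖z ^ 2‖ ≤ 1 := by
    rw [norm_pow]; exact pow_le_one₀ (norm_nonneg _) hz
  have h1 : HasSum f (Li2C z + Li2C (-z)) :=
    (li2_summable hz).hasSum.add (li2_summable hz').hasSum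
  have he : HasSum (fun k : ℕ => f (2 * k)) 0 := by
    have : (fun k : ℕ => f (2 * k)) = fun _ => (0 : ℂ) := by
      funext k
      have hodd : Odd (2 * k + 1) := ⟨k, by ring⟩
      simp only [hf, hodd.neg_pow]
      ring
    rw [this]
    exact hasSum_zero
  have ho : HasSum (fun k : ℕ => f (2 * k + 1)) (Li2C (z ^ 2) / 2) := by
    have h2 := (li2_summable hz2).hasSum.div_const 2
    have heq : (fun k : ℕ => f (2 * k + 1))
        = fun k : ℕ => (z ^ 2) ^ (k + 1) / ((k : ℂ) + 1) ^ 2 / 2 := by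
      funext k
      have heven : Even (2 * k + 1 + 1) := ⟨k + 1, by ring⟩
      have hnz : ((k : ℂ) + 1) ≠ 0 := Nat.cast_add_one_ne_zero k
      simp only [hf]
      push_cast
      rw [show z ^ (2 * k + 1 + 1) = (z ^ 2) ^ (k + 1) by rw [← pow_mul]; ring_nf,
        show (-z) ^ (2 * k + 1 + 1) = (z ^ 2) ^ (k + 1) by
          rw [heven.neg_pow, ← pow_mul]; ring_nf]
      have h2k : ((2 * (k:ℂ)) + 1 + 1) ≠ 0 := by
        have he2 : ((2 * (k:ℂ)) + 1 + 1) = 2 * ((k : ℂ) + 1) := by ring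
        rw [he2]; exact mul_ne_zero two_ne_zero hnz
      field_simp
      ring
    rw [heq]
    exact h2
  have h3 : HasSum f (0 + Li2C (z ^ 2) / 2) := he.even_add_odd ho
  have h4 := h1.unique h3
  rw [h4]
  ring

theorem stmt18 (u x : ℂ) (hu : u = ((Real.sqrt 8 : ℂ) + Complex.I) / 3)
    (hx : x = (1 / 2) * (1 + Complex.I / (Real.sqrt 8 : ℂ))) :
    Li2C (u ^ 4) = 2 * Li2C (u ^ 2) - 2 * Li2C x - (Complex.log (1 - x)) ^ 2 := by
  set s : ℝ := Real.sqrt 8 with hs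
  have hs0 : 0 < s := Real.sqrt_pos.mpr (by norm_num)
  have hs2 : s ^ 2 = 8 := Real.sq_sqrt (by norm_num)
  have hsc : ((s : ℂ)) ^ 2 = 8 := by exact_mod_cast congrArg (fun t : ℝ => (t : ℂ)) hs2
  have hsc0 : (s : ℂ) ≠ 0 := by exact_mod_cast hs0.ne'
  -- rewrite x
  have hxeq : x = ((s : ℂ) + Complex.I) / (2 * (s : ℂ)) := by
    rw [hx]
    field_simp
  have hnsum : Complex.normSq ((s : ℂ) + Complex.I) = 9 := by
    simp only [Complex.normSq_apply, Complex.add_re, Complex.add_im, Complex.ofReal_re,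
      Complex.ofReal_im, Complex.I_re, Complex.I_im]
    nlinarith [hs2]
  -- |u| = 1
  have hnu : ‖u‖ = 1 := by
    have h9 : Complex.normSq u = 1 := by
      rw [hu, Complex.normSq_div, hnsum]
      norm_num [Complex.normSq_apply]
    have := Complex.sq_norm u
    rw [h9] at this
    have habs : ‖u‖ = 1 := by nlinarith [norm_nonneg u]
    exact habs
  -- |x| < 1
  have hnx : ‖x‖ < 1 := by
    have h32 : Complex.normSq x = 9 / 32 := by
      rw [hxeq, Complex.normSq_div, hnsum]
      have : Complex.normSq (2 * (s : ℂ)) = 32 := by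
        simp only [Complex.normSq_apply, Complex.mul_re, Complex.mul_im, Complex.ofReal_re,
          Complex.ofReal_im]
        norm_num
        nlinarith [hs2]
      rw [this]
    have hsq := Complex.sq_norm x
    rw [h32] at hsq
    nlinarith [norm_nonneg x, hsq]
  -- re x = 1/2
  have hxre : x.re = 1 / 2 := by
    rw [hxeq]
    rw [Complex.div_re]
    simp only [Complex.normSq_apply, Complex.add_re, Complex.add_im, Complex.mul_re,
      Complex.mul_im, Complex.ofReal_re, Complex.ofReal_im, Complex.I_re, Complex.I_im,
      Complex.re_ofNat, Complex.im_ofNat]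
    ring_nf
    field_simp
  have hx1 : x - 1 ≠ 0 := by
    intro hc
    have : x = 1 := sub_eq_zero.mp hc
    rw [this] at hnx
    simp at hnx
  -- x / (x-1) = -(u^2)
  have hkey : x / (x - 1) = -(u ^ 2) := by
    rw [div_eq_iff hx1, hu, hxeq]
    have h2s : (2 : ℂ) * (s : ℂ) ≠ 0 := mul_ne_zero two_ne_zero hsc0
    field_simp
    ring_nf
    linear_combination (-(s:ℂ) - Complex.I) * hsc
      + ((s:ℂ) + Complex.I) * Complex.I_sq
  have hnu2 : ‖u ^ 2‖ ≤ 1 := by rw [norm_pow, hnu]; norm_num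
  have hdup := li2_dup hnu2
  have hlan := landen hnx (le_of_eq hxre)
  rw [hkey] at hlan
  rw [show u ^ 4 = (u ^ 2) ^ 2 by ring, hdup]
  linear_combination hlan
end
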